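/- arXiv:2507.17350 — 5 statements merged into one kernel-verified Lean document; each statement's English description precedes it below -/
import Mathlib

section
/- Let d ≥ 1, let γ : (0,∞) → ℝ^{d×d} be Bochner integrable and let Σ ∈ ℝ^{d×d} be symmetric. Then for every ω ∈ ℝ, the Fourier transform of γ_Σ satisfies γ̂_Σ(ω) = Lγ(iω) Σ + Σ (Lγ(iω))^*, where Lγ(iω) = ∫₀^∞ e^{−iωt} γ(t) dt and ^* denotes the conjugate transpose. -/
open MeasureTheory Matrix Set Filter
open scoped Matrix.Norms.L2Operator Real Topology ComplexOrder

noncomputable section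

/-- The function `γ_Σ` built from a memory kernel `γ` and a symmetric matrix `Σ`:
`γ_Σ(t) = γ(t)Σ` for `t > 0`, `γ_Σ(t) = Σ γ(-t)ᵀ` for `t < 0`,
and `γ_Σ(0) = (γ(0)Σ + Σγ(0)ᵀ)/2`. -/
def gammaSigma {d : ℕ} (γ : ℝ → Matrix (Fin d) (Fin d) ℝ) (S : Matrix (Fin d) (Fin d) ℝ)
    (t : ℝ) : Matrix (Fin d) (Fin d) ℝ :=
  if 0 < t then γ t * S
  else if t < 0 then S * (γ (-t))ᵀ
  else (2 : ℝ)⁻¹ • (γ 0 * S + S * (γ 0)ᵀ)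

/-- Entrywise Fourier transform `ĥ(ω) = ∫_ℝ e^{-iωt} h(t) dt` of a matrix-valued function. -/
def fourierMat {d : ℕ} (h : ℝ → Matrix (Fin d) (Fin d) ℝ) (ω : ℝ) :
    Matrix (Fin d) (Fin d) ℂ :=
  ∫ t : ℝ, Complex.exp (-(Complex.I * ω * t)) • (h t).map Complex.ofReal

/-- Entrywise Laplace transform `Lγ(ζ) = ∫₀^∞ e^{-ζt} γ(t) dt` of a matrix-valued function. -/
def laplaceMat {d : ℕ} (γ : ℝ → Matrix (Fin d) (Fin d) ℝ) (z : ℂ) :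
    Matrix (Fin d) (Fin d) ℂ :=
  ∫ t in Ioi (0 : ℝ), Complex.exp (-(z * t)) • (γ t).map Complex.ofReal

/-- Auxiliary: entrywise real-to-complex map as a continuous linear map. -/
def ofRealCLM' (d : ℕ) : Matrix (Fin d) (Fin d) ℝ →L[ℝ] Matrix (Fin d) (Fin d) ℂ :=
  LinearMap.toContinuousLinearMap
    { toFun := fun A => A.map Complex.ofReal
      map_add' := fun A B => by ext i j; simp [Matrix.map_apply]
      map_smul' := fun c A => by ext i j; simp [Matrix.map_apply] }

/-- Auxiliary: conjugate transpose as a real continuous linear map. -/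
def starCLM' (d : ℕ) : Matrix (Fin d) (Fin d) ℂ →L[ℝ] Matrix (Fin d) (Fin d) ℂ :=
  LinearMap.toContinuousLinearMap
    { toFun := fun A => Aᴴ
      map_add' := fun A B => by ext i j; simp [Matrix.conjTranspose_apply]
      map_smul' := fun c A => by
        ext i j
        simp [Matrix.conjTranspose_apply, Complex.real_smul, Complex.conj_ofReal] }

/-- Auxiliary: right multiplication as a continuous linear map. -/
def mulRightCLM' (d : ℕ) (C : Matrix (Fin d) (Fin d) ℂ) :
    Matrix (Fin d) (Fin d) ℂ →L[ℝ] Matrix (Fin d) (Fin d) ℂ :=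
  LinearMap.toContinuousLinearMap (LinearMap.mulRight ℝ C)

/-- Auxiliary: left multiplication as a continuous linear map. -/
def mulLeftCLM' (d : ℕ) (C : Matrix (Fin d) (Fin d) ℂ) :
    Matrix (Fin d) (Fin d) ℂ →L[ℝ] Matrix (Fin d) (Fin d) ℂ :=
  LinearMap.toContinuousLinearMap (LinearMap.mulLeft ℝ C)

lemma smul_map_mul_right' {d : ℕ} (A S : Matrix (Fin d) (Fin d) ℝ) (c : ℂ) :
    c • ((A * S).map Complex.ofReal) = (c • A.map Complex.ofReal) * S.map Complex.ofReal := by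
  ext i j
  simp [Matrix.mul_apply, Matrix.map_apply, Finset.mul_sum, mul_assoc]

lemma conj_smul_map_left' {d : ℕ} (A S : Matrix (Fin d) (Fin d) ℝ) (c : ℂ) :
    (starRingEnd ℂ c) • ((S * Aᵀ).map Complex.ofReal) =
      S.map Complex.ofReal * (c • A.map Complex.ofReal)ᴴ := by
  ext i j
  simp [Matrix.mul_apply, Matrix.map_apply, Matrix.conjTranspose_apply, Matrix.transpose_apply,
    Finset.mul_sum, Complex.conj_ofReal]
  exact Finset.sum_congr rfl fun x _ => by ring

/-- `γ̂_Σ(ω) = Lγ(iω) Σ + Σ (Lγ(iω))^*` for every `ω ∈ ℝ`. -/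
theorem fourier_gammaSigma_eq_laplace {d : ℕ} (hd : 1 ≤ d)
    (γ : ℝ → Matrix (Fin d) (Fin d) ℝ) (hγ : IntegrableOn γ (Ioi 0))
    (S : Matrix (Fin d) (Fin d) ℝ) (hS : S.IsSymm) :
    ∀ ω : ℝ,
      fourierMat (gammaSigma γ S) ω =
        laplaceMat γ (Complex.I * ω) * S.map Complex.ofReal +
          S.map Complex.ofReal * (laplaceMat γ (Complex.I * ω))ᴴ := by
  intro ω
  set e : ℝ → ℂ := fun t => Complex.exp (-(Complex.I * ω * t)) with he
  have hcont : Continuous e := by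
    apply Complex.continuous_exp.comp
    continuity
  have hnorm : ∀ t : ℝ, ‖e t‖ = 1 := by
    intro t
    simp [he, Complex.norm_exp]
  set G : ℝ → Matrix (Fin d) (Fin d) ℂ := fun t => e t • (γ t).map Complex.ofReal with hGdef
  have hγℂ : IntegrableOn (fun t => (γ t).map Complex.ofReal) (Ioi 0) :=
    (ofRealCLM' d).integrable_comp hγ
  have hG : IntegrableOn G (Ioi 0) := by
    refine Integrable.mono' hγℂ.norm ?_ ?_
    · exact hcont.aestronglyMeasurable.smul hγℂ.aestronglyMeasurable
    · filter_upwards with t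
      rw [norm_smul, hnorm, one_mul]
  have hL : laplaceMat γ (Complex.I * ω) = ∫ t in Ioi (0:ℝ), G t := by
    simp only [laplaceMat, hGdef, he, mul_assoc]
  set f : ℝ → Matrix (Fin d) (Fin d) ℂ :=
    fun t => e t • ((gammaSigma γ S t).map Complex.ofReal) with hfdef
  -- positive part
  have hposEq : EqOn f (fun t => (mulRightCLM' d (S.map Complex.ofReal)) (G t)) (Ioi 0) := by
    intro t ht
    show e t • ((gammaSigma γ S t).map Complex.ofReal) = G t * S.map Complex.ofReal
    rw [gammaSigma, if_pos (mem_Ioi.mp ht)]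
    exact smul_map_mul_right' (γ t) S (e t)
  have hIntPos : IntegrableOn f (Ioi 0) := by
    refine ((mulRightCLM' d (S.map Complex.ofReal)).integrable_comp hG).congr ?_
    exact (ae_restrict_mem measurableSet_Ioi).mono fun t ht => (hposEq ht).symm
  have hpos : (∫ t in Ioi (0:ℝ), f t)
      = laplaceMat γ (Complex.I * ω) * S.map Complex.ofReal := by
    rw [setIntegral_congr_fun measurableSet_Ioi hposEq,
      ContinuousLinearMap.integral_comp_comm _ hG, hL]
    simp only [mulRightCLM', LinearMap.coe_toContinuousLinearMap', LinearMap.mulRight_apply]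
  -- negative part
  set Hn : ℝ → Matrix (Fin d) (Fin d) ℂ :=
    fun t => (mulLeftCLM' d (S.map Complex.ofReal)) ((starCLM' d) (G t)) with hHdef
  have hHint : IntegrableOn Hn (Ioi 0) :=
    (mulLeftCLM' d (S.map Complex.ofReal)).integrable_comp ((starCLM' d).integrable_comp hG)
  have hHapp : ∀ t : ℝ, Hn t = S.map Complex.ofReal * (G t)ᴴ := by
    intro t
    simp only [hHdef, mulLeftCLM', starCLM', LinearMap.coe_toContinuousLinearMap',
      LinearMap.mulLeft_apply, LinearMap.coe_mk, AddHom.coe_mk]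
  have hnegEq : ∀ t : ℝ, t < 0 → f t = Hn (-t) := by
    intro t ht
    rw [hHapp]
    show e t • ((gammaSigma γ S t).map Complex.ofReal)
      = S.map Complex.ofReal * (G (-t))ᴴ
    have h1 : gammaSigma γ S t = S * (γ (-t))ᵀ := by
      rw [gammaSigma, if_neg (by linarith), if_pos ht]
    have h2 : e t = starRingEnd ℂ (e (-t)) := by
      simp only [he]
      rw [← Complex.exp_conj]
      congr 1
      simp [Complex.conj_I, Complex.conj_ofReal]
    rw [h1, h2]
    exact conj_smul_map_left' (γ (-t)) S (e (-t))
  have hA : MeasurableEmbedding (fun x : ℝ => -x) := measurableEmbedding_neg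
  have hmeas' : (volume : Measure ℝ).restrict (Ici 0)
      = Measure.map (fun x : ℝ => -x) (volume.restrict (Iic 0)) := by
    conv_lhs => rw [← Measure.map_neg_eq_self (volume : Measure ℝ)]
    rw [hA.restrict_map]
    congr 1
    rw [show (fun x : ℝ => -x) ⁻¹' Ici 0 = Iic 0 by ext x; simp]
  have hHneg : IntegrableOn (fun t => Hn (-t)) (Iic (0:ℝ)) := by
    have hIci : IntegrableOn Hn (Ici (0:ℝ)) := (integrableOn_Ici_iff_integrableOn_Ioi (f := Hn)).2 hHint
    rw [IntegrableOn, hmeas', hA.integrable_map_iff] at hIci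
    exact hIci
  have haeq : (fun t => Hn (-t)) =ᵐ[volume.restrict (Iic (0:ℝ))] f := by
    have h0 : ∀ᵐ t ∂(volume.restrict (Iic (0:ℝ))), t ≠ 0 := by
      refine ae_restrict_of_ae ?_
      rw [ae_iff]
      simp
    filter_upwards [ae_restrict_mem measurableSet_Iic, h0] with t ht hne
    exact (hnegEq t (lt_of_le_of_ne ht hne)).symm
  have hIntNeg : IntegrableOn f (Iic 0) := hHneg.congr haeq
  have hneg : (∫ t in Iic (0:ℝ), f t)
      = S.map Complex.ofReal * (laplaceMat γ (Complex.I * ω))ᴴ := by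
    rw [← integral_congr_ae haeq, integral_comp_neg_Iic, neg_zero]
    have e2 : (∫ t in Ioi (0:ℝ), Hn t)
        = (mulLeftCLM' d (S.map Complex.ofReal)) ((starCLM' d) (∫ t in Ioi (0:ℝ), G t)) := by
      simp only [hHdef]
      rw [ContinuousLinearMap.integral_comp_comm _ ((starCLM' d).integrable_comp hG),
        ContinuousLinearMap.integral_comp_comm _ hG]
    rw [e2, hL]
    simp only [mulLeftCLM', starCLM', LinearMap.coe_toContinuousLinearMap',
      LinearMap.mulLeft_apply, LinearMap.coe_mk, AddHom.coe_mk]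
  rw [show fourierMat (gammaSigma γ S) ω = ∫ t : ℝ, f t from rfl,
    ← intervalIntegral.integral_Iic_add_Ioi hIntNeg hIntPos, hpos, hneg, add_comm]
end
end

section
/- Let d ≥ 1, D ∈ ℝ^{d×d}, let γ : (0,∞) → ℝ^{d×d} be Bochner integrable on (0,∞), and let r be the differential resolvent of γ with drift matrix D. If r is Bochner integrable on (0,∞), then: (a) r′ is Bochner integrable on (0,∞), with ‖r′‖_{L¹} ≤ ‖D‖₂ ‖r‖_{L¹} + ‖γ‖_{L¹} ‖r‖_{L¹}; (b) r(t) tends to the zero matrix as t → ∞; (c) r is bounded on [0,∞); (d) r is square integrable on (0,∞). -/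
open MeasureTheory Matrix Set Filter Convolution
open scoped Matrix.Norms.L2Operator Real Topology ComplexOrder

noncomputable section

-- auxiliary: limit of an integrable function on (0,∞) must be zero
lemma aux_limit_zero {E : Type*} [NormedAddCommGroup E] {f : ℝ → E} {L : E}
    (hf : IntegrableOn f (Ioi 0)) (h : Tendsto f atTop (𝓝 L)) : L = 0 := by
  by_contra hL
  have hε : (0 : ℝ) < ‖L‖ / 2 := by have := norm_pos_iff.mpr hL; linarith
  have hev : ∀ᶠ t in atTop, ‖L‖ / 2 ≤ ‖f t‖ :=
    h.norm.eventually (eventually_ge_nhds (by linarith))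
  obtain ⟨T, hT⟩ := hev.exists_forall_of_atTop
  set T' := max T 1 with hT'
  have hsub : Ioi T' ⊆ Ioi (0 : ℝ) := Ioi_subset_Ioi (le_trans zero_le_one (le_max_right T 1))
  have hconst : Integrable (fun _ : ℝ => ‖L‖ / 2) (volume.restrict (Ioi T')) := by
    refine Integrable.mono (hf.mono_set hsub) aestronglyMeasurable_const ?_
    refine (ae_restrict_iff' measurableSet_Ioi).2 (Eventually.of_forall fun t ht => ?_)
    have := hT t (le_trans (le_max_left T 1) (le_of_lt ht))
    simpa [Real.norm_of_nonneg (le_of_lt hε)] using this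
  rcases integrable_const_iff.mp hconst with h0 | hfin
  · exact absurd h0 (ne_of_gt hε)
  · have hfin := hfin.measure_univ_lt_top
    rw [Measure.restrict_apply_univ, Real.volume_Ioi] at hfin
    exact absurd hfin (by simp)

section ConvLemma

variable {d : ℕ}

local notation "𝕄" => Matrix (Fin d) (Fin d) ℝ

lemma aux_conv (γ r : ℝ → 𝕄) (hγ : IntegrableOn γ (Ioi 0)) (hr : IntegrableOn r (Ioi 0)) :
    IntegrableOn (fun t => ∫ s in (0:ℝ)..t, γ (t - s) * r s) (Ioi 0) ∧
      (∫ t in Ioi (0:ℝ), ‖∫ s in (0:ℝ)..t, γ (t - s) * r s‖) ≤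
        (∫ t in Ioi (0:ℝ), ‖γ t‖) * (∫ t in Ioi (0:ℝ), ‖r t‖) := by
  set f : ℝ → 𝕄 := (Ioi 0).indicator γ with hfdef
  set g : ℝ → 𝕄 := (Ioi 0).indicator r with hgdef
  have hf : Integrable f := by
    rw [hfdef, integrable_indicator_iff measurableSet_Ioi]; exact hγ
  have hg : Integrable g := by
    rw [hgdef, integrable_indicator_iff measurableSet_Ioi]; exact hr
  set L : 𝕄 →L[ℝ] 𝕄 →L[ℝ] 𝕄 := ContinuousLinearMap.mul ℝ 𝕄 with hLdef
  -- the interval integral agrees with the full-line convolution on Ioi 0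
  have key : ∀ t ∈ Ioi (0:ℝ), (∫ s in (0:ℝ)..t, γ (t - s) * r s) = (f ⋆[L, volume] g) t := by
    intro t ht
    rw [intervalIntegral.integral_of_le (le_of_lt ht), convolution_def]
    have h1 : ∀ s : ℝ, L (f s) (g (t - s)) = f s * g (t - s) := fun s => rfl
    simp_rw [h1]
    have h2 : (∫ s : ℝ, f s * g (t - s)) = ∫ s : ℝ, f (t - s) * g s := by
      have := integral_sub_left_eq_self (fun u => f u * g (t - u)) volume t
      simp only [sub_sub_cancel] at this
      exact this.symm
    rw [h2]
    rw [← integral_indicator measurableSet_Ioc]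
    refine (integral_congr_ae ?_).symm
    have hns : (({t} : Set ℝ)ᶜ : Set ℝ) ∈ ae volume := by
      rw [mem_ae_iff]; simp
    filter_upwards [hns] with s hs
    simp only [mem_compl_iff, mem_singleton_iff] at hs
    by_cases hmem : s ∈ Ioc 0 t
    · have hst : s < t := lt_of_le_of_ne hmem.2 hs
      rw [indicator_of_mem hmem]
      rw [hfdef, hgdef, indicator_of_mem (by simp [sub_pos.mpr hst] : t - s ∈ Ioi (0:ℝ)),
        indicator_of_mem (by simpa using hmem.1 : s ∈ Ioi (0:ℝ))]
    · rw [indicator_of_notMem hmem]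
      rcases not_and_or.mp hmem with h | h
      · push_neg at h
        rw [hgdef, indicator_of_notMem (by simpa using h), mul_zero]
      · push_neg at h
        rw [hfdef, indicator_of_notMem (by simp only [mem_Ioi, not_lt]; linarith), zero_mul]
  have hconvInt : Integrable (f ⋆[L, volume] g) := hf.integrable_convolution L hg
  set Lr : ℝ →L[ℝ] ℝ →L[ℝ] ℝ := ContinuousLinearMap.mul ℝ ℝ with hLrdef
  have hnormconv : Integrable ((fun t => ‖f t‖) ⋆[Lr, volume] fun t => ‖g t‖) :=
    hf.norm.integrable_convolution Lr hg.norm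
  have hconvnn : ∀ t, 0 ≤ ((fun t => ‖f t‖) ⋆[Lr, volume] fun t => ‖g t‖) t := by
    intro t
    rw [convolution_def]
    exact integral_nonneg fun s => mul_nonneg (norm_nonneg _) (norm_nonneg _)
  have hbound : ∀ᵐ t : ℝ, ‖(f ⋆[L, volume] g) t‖ ≤
      ((fun t => ‖f t‖) ⋆[Lr, volume] fun t => ‖g t‖) t := by
    filter_upwards [hf.norm.ae_convolution_exists Lr hg.norm] with t hexists
    rw [convolution_def, convolution_def]
    have hint : Integrable (fun s => ‖f s‖ * ‖g (t - s)‖) := by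
      exact hexists
    calc ‖∫ s : ℝ, L (f s) (g (t - s))‖ ≤ ∫ s : ℝ, ‖L (f s) (g (t - s))‖ :=
          norm_integral_le_integral_norm _
      _ ≤ ∫ s : ℝ, ‖f s‖ * ‖g (t - s)‖ := by
          refine integral_mono_of_nonneg (Eventually.of_forall fun s => norm_nonneg _) hint
            (Eventually.of_forall fun s => ?_)
          exact norm_mul_le _ _
      _ = ∫ s : ℝ, Lr ((fun t => ‖f t‖) s) ((fun t => ‖g t‖) (t - s)) := rfl
  constructor
  · exact (hconvInt.integrableOn.congr_fun (fun t ht => (key t ht).symm) measurableSet_Ioi)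
  · have step1 : (∫ t in Ioi (0:ℝ), ‖∫ s in (0:ℝ)..t, γ (t - s) * r s‖) =
        ∫ t in Ioi (0:ℝ), ‖(f ⋆[L, volume] g) t‖ :=
      setIntegral_congr_fun measurableSet_Ioi fun t ht => by rw [key t ht]
    rw [step1]
    calc (∫ t in Ioi (0:ℝ), ‖(f ⋆[L, volume] g) t‖)
        ≤ ∫ t in Ioi (0:ℝ), ((fun t => ‖f t‖) ⋆[Lr, volume] fun t => ‖g t‖) t := by
          refine integral_mono_ae hconvInt.norm.integrableOn hnormconv.integrableOn ?_
          exact ae_restrict_of_ae hbound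
      _ ≤ ∫ t : ℝ, ((fun t => ‖f t‖) ⋆[Lr, volume] fun t => ‖g t‖) t := by
          refine setIntegral_le_integral hnormconv (Eventually.of_forall fun t => hconvnn t)
      _ = (∫ t : ℝ, ‖f t‖) * ∫ t : ℝ, ‖g t‖ := by
          rw [integral_convolution Lr hf.norm hg.norm]; rfl
      _ = (∫ t in Ioi (0:ℝ), ‖γ t‖) * ∫ t in Ioi (0:ℝ), ‖r t‖ := by
          congr 1
          · rw [← integral_indicator measurableSet_Ioi]
            exact integral_congr_ae (Eventually.of_forall fun t =>
              norm_indicator_eq_indicator_norm γ t)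
          · rw [← integral_indicator measurableSet_Ioi]
            exact integral_congr_ae (Eventually.of_forall fun t =>
              norm_indicator_eq_indicator_norm r t)

end ConvLemma

/-- `r` (with derivative `r'`) is the differential resolvent of the kernel `γ` with drift
matrix `D`: `r` is continuously differentiable on `[0,∞)`, `r(0) = I`, and
`r′(t) = -D r(t) - ∫₀ᵗ γ(t-s) r(s) ds = -r(t) D - ∫₀ᵗ r(t-s) γ(s) ds` for all `t ≥ 0`. -/
structure IsDiffResolvent {d : ℕ} (D : Matrix (Fin d) (Fin d) ℝ)
    (γ r r' : ℝ → Matrix (Fin d) (Fin d) ℝ) : Prop where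
  init : r 0 = 1
  hasDeriv : ∀ t ∈ Ici (0 : ℝ), HasDerivWithinAt r (r' t) (Ici 0) t
  contDeriv : ContinuousOn r' (Ici 0)
  eq_left : ∀ t ∈ Ici (0 : ℝ), r' t = -(D * r t) - ∫ s in (0 : ℝ)..t, γ (t - s) * r s
  eq_right : ∀ t ∈ Ici (0 : ℝ), r' t = -(r t * D) - ∫ s in (0 : ℝ)..t, r (t - s) * γ s

/-- if `γ ∈ L¹(0,∞)` and the differential resolvent `r` is integrable on
`(0,∞)`, then (a) `r' ∈ L¹(0,∞)` with `‖r'‖_{L¹} ≤ ‖D‖₂ ‖r‖_{L¹} + ‖γ‖_{L¹} ‖r‖_{L¹}`,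
(b) `r(t) → 0` as `t → ∞`, (c) `r` is bounded on `[0,∞)`, and (d) `r ∈ L²(0,∞)`.
Here `‖·‖` is the spectral (ℓ²-operator) norm on matrices. -/
theorem resolvent_integrable_consequences {d : ℕ} (hd : 1 ≤ d)
    (D : Matrix (Fin d) (Fin d) ℝ)
    (γ r r' : ℝ → Matrix (Fin d) (Fin d) ℝ)
    (hγ : IntegrableOn γ (Ioi 0))
    (hr : IsDiffResolvent D γ r r')
    (hrL1 : IntegrableOn r (Ioi 0)) :
    (IntegrableOn r' (Ioi 0) ∧
      (∫ t in Ioi (0 : ℝ), ‖r' t‖) ≤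
        ‖D‖ * (∫ t in Ioi (0 : ℝ), ‖r t‖) +
          (∫ t in Ioi (0 : ℝ), ‖γ t‖) * (∫ t in Ioi (0 : ℝ), ‖r t‖)) ∧
    Tendsto r atTop (nhds 0) ∧
    (∃ C : ℝ, ∀ t ∈ Ici (0 : ℝ), ‖r t‖ ≤ C) ∧
    MemLp r 2 (volume.restrict (Ioi 0)) := by
  obtain ⟨hconvInt, hconvBound⟩ := aux_conv γ r hγ hrL1
  set c : ℝ → Matrix (Fin d) (Fin d) ℝ := fun t => ∫ s in (0:ℝ)..t, γ (t - s) * r s with hcdef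
  -- D * r is integrable on Ioi 0
  have hDr : IntegrableOn (fun t => D * r t) (Ioi 0) := by
    have := (ContinuousLinearMap.mul ℝ (Matrix (Fin d) (Fin d) ℝ) D).integrable_comp hrL1
    exact this
  -- the expression for r'
  have hEqOn : EqOn r' (fun t => -(D * r t) - c t) (Ioi 0) := fun t ht =>
    hr.eq_left t (mem_Ici.2 (le_of_lt ht))
  have hexprInt : IntegrableOn (fun t => -(D * r t) - c t) (Ioi 0) := hDr.neg.sub hconvInt
  have ha1 : IntegrableOn r' (Ioi 0) :=
    hexprInt.congr_fun (fun t ht => (hEqOn ht).symm) measurableSet_Ioi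
  -- part (a) norm bound
  have ha2 : (∫ t in Ioi (0 : ℝ), ‖r' t‖) ≤
      ‖D‖ * (∫ t in Ioi (0 : ℝ), ‖r t‖) +
        (∫ t in Ioi (0 : ℝ), ‖γ t‖) * (∫ t in Ioi (0 : ℝ), ‖r t‖) := by
    have e1 : (∫ t in Ioi (0 : ℝ), ‖r' t‖) = ∫ t in Ioi (0:ℝ), ‖-(D * r t) - c t‖ :=
      setIntegral_congr_fun measurableSet_Ioi fun t ht => by rw [hEqOn ht]
    rw [e1]
    have e2 : (∫ t in Ioi (0:ℝ), ‖-(D * r t) - c t‖) ≤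
        ∫ t in Ioi (0:ℝ), (‖D‖ * ‖r t‖ + ‖c t‖) := by
      refine integral_mono hexprInt.norm ((hrL1.norm.const_mul ‖D‖).add hconvInt.norm) fun t => ?_
      calc ‖-(D * r t) - c t‖ ≤ ‖-(D * r t)‖ + ‖c t‖ := norm_sub_le _ _
        _ = ‖D * r t‖ + ‖c t‖ := by rw [norm_neg]
        _ ≤ ‖D‖ * ‖r t‖ + ‖c t‖ := by
            exact add_le_add_left (norm_mul_le D (r t)) _
    refine e2.trans ?_
    rw [integral_add (hrL1.norm.const_mul ‖D‖) hconvInt.norm, integral_const_mul]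
    exact add_le_add_right hconvBound _
  -- continuity of r on Ici 0
  have hcont : ContinuousOn r (Ici 0) := fun t ht =>
    (hr.hasDeriv t ht).continuousWithinAt
  -- FTC: r t = 1 + ∫ 0..t r'
  have hftc : ∀ t : ℝ, 0 ≤ t → (∫ s in (0:ℝ)..t, r' s) = r t - 1 := by
    intro t ht
    have hIcc : Icc (0:ℝ) t ⊆ Ici 0 := fun x hx => hx.1
    have hint : IntervalIntegrable r' volume 0 t :=
      (hr.contDeriv.mono hIcc).intervalIntegrable_of_Icc ht
    have := intervalIntegral.integral_eq_sub_of_hasDeriv_right_of_le ht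
      (hcont.mono hIcc)
      (fun s hs => (((hr.hasDeriv s (le_of_lt hs.1)).hasDerivAt
        (Ici_mem_nhds hs.1)).hasDerivWithinAt)) hint
    rw [this, hr.init]
  have htend : Tendsto r atTop (𝓝 (1 + ∫ t in Ioi (0:ℝ), r' t)) := by
    have h1 : Tendsto (fun t : ℝ => ∫ s in (0:ℝ)..t, r' s) atTop
        (𝓝 (∫ t in Ioi (0:ℝ), r' t)) :=
      intervalIntegral_tendsto_integral_Ioi 0 ha1 tendsto_id
    have h2 : Tendsto (fun t : ℝ => 1 + ∫ s in (0:ℝ)..t, r' s) atTop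
        (𝓝 (1 + ∫ t in Ioi (0:ℝ), r' t)) := tendsto_const_nhds.add h1
    refine h2.congr' ?_
    filter_upwards [eventually_ge_atTop (0:ℝ)] with t ht
    rw [hftc t ht]
    abel
  have hL0 : (1 + ∫ t in Ioi (0:ℝ), r' t) = 0 := aux_limit_zero hrL1 htend
  rw [hL0] at htend
  -- part (c)
  have hcbdd : ∃ C : ℝ, 0 ≤ C ∧ ∀ t ∈ Ici (0 : ℝ), ‖r t‖ ≤ C := by
    have hev : ∀ᶠ t in atTop, ‖r t‖ ≤ 1 := by
      have h := htend.norm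
      simp only [norm_zero] at h
      exact h.eventually (eventually_le_nhds one_pos)
    obtain ⟨T, hT⟩ := hev.exists_forall_of_atTop
    obtain ⟨C, hC⟩ := (isCompact_Icc (a := (0:ℝ)) (b := max T 0)).exists_bound_of_continuousOn
      (hcont.mono (fun x hx => hx.1))
    refine ⟨max C 1, le_trans zero_le_one (le_max_right C 1), fun t ht => ?_⟩
    by_cases h : t ≤ max T 0
    · exact (hC t ⟨ht, h⟩).trans (le_max_left _ _)
    · push_neg at h
      exact (hT t ((le_max_left T 0).trans h.le)).trans (le_max_right _ _)
  obtain ⟨C, hC0, hC⟩ := hcbdd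
  -- part (d)
  have hmeas : AEStronglyMeasurable r (volume.restrict (Ioi 0)) := hrL1.aestronglyMeasurable
  have hd2 : MemLp r 2 (volume.restrict (Ioi 0)) := by
    rw [memLp_two_iff_integrable_sq_norm hmeas]
    refine Integrable.mono' (hrL1.norm.const_mul C)
      ((continuous_pow 2).comp_aestronglyMeasurable hmeas.norm) ?_
    refine (ae_restrict_iff' measurableSet_Ioi).2 (Eventually.of_forall fun t ht => ?_)
    rw [Real.norm_of_nonneg (sq_nonneg _), pow_two]
    exact mul_le_mul_of_nonneg_right (hC t (mem_Ici.2 (le_of_lt ht))) (norm_nonneg _)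
  exact ⟨⟨ha1, ha2⟩, htend, ⟨C, hC⟩, hd2⟩
end
end

section
/- Let d ≥ 1, D ∈ ℝ^{d×d}, let γ : (0,∞) → ℝ^{d×d} be Bochner integrable, and let r be the differential resolvent of γ with drift matrix D; assume that r is Bochner integrable on (0,∞). Let f : ℝ → ℝ^d be bounded and continuous. Then v(t) = ∫_{−∞}^t r(t−τ) f(τ) dτ defines a bounded continuously differentiable function v : ℝ → ℝ^d satisfying v′(t) = −D v(t) − ∫_{−∞}^t γ(t−s) v(s) ds + f(t) for all t ∈ ℝ. -/
open MeasureTheory Matrix Set Filter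
open scoped Matrix.Norms.L2Operator Real Topology ComplexOrder
open scoped Convolution

noncomputable section

namespace GLEAux

variable {d : ℕ}

def mvL : Matrix (Fin d) (Fin d) ℝ →L[ℝ] (Fin d → ℝ) →L[ℝ] (Fin d → ℝ) :=
  LinearMap.toContinuousLinearMap
    ((LinearMap.toContinuousLinearMap.toLinearMap).comp
      (LinearMap.mk₂ ℝ (fun A x => A *ᵥ x) Matrix.add_mulVec
        (fun c A x => Matrix.smul_mulVec c A x) Matrix.mulVec_add
        (fun c A x => A.mulVec_smul c x)))

@[simp] lemma mvL_apply (A : Matrix (Fin d) (Fin d) ℝ) (x : Fin d → ℝ) :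
    mvL A x = A *ᵥ x := rfl

def mulL : Matrix (Fin d) (Fin d) ℝ →L[ℝ] Matrix (Fin d) (Fin d) ℝ →L[ℝ]
    Matrix (Fin d) (Fin d) ℝ :=
  ContinuousLinearMap.mul ℝ _

@[simp] lemma mulL_apply (A B : Matrix (Fin d) (Fin d) ℝ) : mulL A B = A * B := rfl

/-- quasi measure preserving subtraction on a product with a restricted first factor -/
lemma qmp_sub_restrict (S : Set ℝ) :
    Measure.QuasiMeasurePreserving (fun p : ℝ × ℝ => p.1 - p.2)
      (((volume : Measure ℝ).restrict S).prod (volume : Measure ℝ)) (volume : Measure ℝ) := by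
  have h1 : Measure.QuasiMeasurePreserving (fun p : ℝ × ℝ => p.1 - p.2)
      ((volume : Measure ℝ).prod ((volume : Measure ℝ).restrict S)) (volume : Measure ℝ) :=
    quasiMeasurePreserving_sub _ _
  have h2 := (Measure.measurePreserving_swap (μ := (volume : Measure ℝ).restrict S)
      (ν := (volume : Measure ℝ))).quasiMeasurePreserving
  have h3 : Measure.QuasiMeasurePreserving (fun x : ℝ => -x) (volume : Measure ℝ)
      (volume : Measure ℝ) := (Measure.measurePreserving_neg _).quasiMeasurePreserving
  have key : (fun p : ℝ × ℝ => p.1 - p.2) =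
      (fun x : ℝ => -x) ∘ (fun p : ℝ × ℝ => p.1 - p.2) ∘ Prod.swap := by
    funext p; simp [Prod.swap]
  rw [key]
  exact h3.comp (h1.comp h2)

variable {f : ℝ → Fin d → ℝ} {C : ℝ} {g : ℝ → Matrix (Fin d) (Fin d) ℝ}

/-- integrability of the convolution integrand -/
lemma conv_integrand (hg : Integrable g (volume : Measure ℝ)) (hfc : Continuous f)
    (hC : ∀ x, ‖f x‖ ≤ C) (u : ℝ) :
    Integrable (fun s => mvL (g s) (f (u - s))) (volume : Measure ℝ) := by
  refine Integrable.mono' ((hg.norm.const_mul ‖(mvL : Matrix (Fin d) (Fin d) ℝ →L[ℝ] _)‖).mul_const C)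
    (mvL.aestronglyMeasurable_comp₂ hg.aestronglyMeasurable
      ((hfc.comp (continuous_const.sub continuous_id)).aestronglyMeasurable)) ?_
  filter_upwards with s
  calc ‖mvL (g s) (f (u - s))‖ ≤ ‖mvL (d := d)‖ * ‖g s‖ * ‖f (u - s)‖ := mvL.le_opNorm₂ _ _
  _ ≤ ‖mvL (d := d)‖ * ‖g s‖ * C := by
      exact mul_le_mul_of_nonneg_left (hC _) (by positivity)

/-- integrability of the swapped convolution integrand -/
lemma conv_integrand' (hg : Integrable g (volume : Measure ℝ)) (hfc : Continuous f)
    (hC : ∀ x, ‖f x‖ ≤ C) (u : ℝ) :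
    Integrable (fun τ => mvL (g (u - τ)) (f τ)) (volume : Measure ℝ) := by
  refine Integrable.mono' (((hg.comp_sub_left u).norm.const_mul
      ‖(mvL : Matrix (Fin d) (Fin d) ℝ →L[ℝ] _)‖).mul_const C)
    (mvL.aestronglyMeasurable_comp₂ (hg.comp_sub_left u).aestronglyMeasurable
      hfc.aestronglyMeasurable) ?_
  filter_upwards with s
  calc ‖mvL (g (u - s)) (f s)‖ ≤ ‖mvL (d := d)‖ * ‖g (u - s)‖ * ‖f s‖ := mvL.le_opNorm₂ _ _
  _ ≤ ‖mvL (d := d)‖ * ‖g (u - s)‖ * C := by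
      exact mul_le_mul_of_nonneg_left (hC _) (by positivity)

/-- bound on the convolution -/
lemma conv_bound (hg : Integrable g (volume : Measure ℝ)) (hfc : Continuous f)
    (hC : ∀ x, ‖f x‖ ≤ C) (u : ℝ) :
    ‖(g ⋆[mvL] f) u‖ ≤ ‖mvL (d := d)‖ * (∫ x, ‖g x‖) * C := by
  rw [convolution_def]
  calc ‖∫ s, mvL (g s) (f (u - s))‖ ≤ ∫ s, ‖mvL (d := d)‖ * ‖g s‖ * C := by
        refine norm_integral_le_of_norm_le ((hg.norm.const_mul _).mul_const _) ?_
        filter_upwards with s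
        calc ‖mvL (g s) (f (u - s))‖ ≤ ‖mvL (d := d)‖ * ‖g s‖ * ‖f (u - s)‖ :=
              mvL.le_opNorm₂ _ _
        _ ≤ ‖mvL (d := d)‖ * ‖g s‖ * C :=
              mul_le_mul_of_nonneg_left (hC _) (by positivity)
  _ = ‖mvL (d := d)‖ * (∫ x, ‖g x‖) * C := by
        rw [integral_mul_const, integral_const_mul]

/-- a convolution with an indicator kernel as a one-sided integral -/
lemma conv_indicator_eq (g : ℝ → Matrix (Fin d) (Fin d) ℝ) (h : ℝ → Fin d → ℝ) (u : ℝ) :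
    ((Set.indicator (Ioi (0:ℝ)) g) ⋆[mvL] h) u = ∫ τ in Iic u, g (u - τ) *ᵥ h τ := by
  rw [convolution_eq_swap]
  have : ∀ τ : ℝ, mvL (Set.indicator (Ioi (0:ℝ)) g (u - τ)) (h τ) =
      Set.indicator (Iio u) (fun τ => g (u - τ) *ᵥ h τ) τ := by
    intro τ
    by_cases hτ : τ < u
    · rw [Set.indicator_of_mem (by simpa using hτ), Set.indicator_of_mem (mem_Iio.2 hτ)]
      simp
    · rw [Set.indicator_of_notMem (by simpa using hτ), Set.indicator_of_notMem
        (by simpa using hτ)]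
      simp
  simp_rw [this]
  rw [integral_indicator measurableSet_Iio]
  exact setIntegral_congr_set Iio_ae_eq_Iic

end GLEAux

namespace GLEAux
variable {d : ℕ} {f : ℝ → Fin d → ℝ} {C : ℝ} {g : ℝ → Matrix (Fin d) (Fin d) ℝ}

lemma conv_cont (hg : Integrable g (volume : Measure ℝ)) (hfc : Continuous f)
    (hC : ∀ x, ‖f x‖ ≤ C) : Continuous (g ⋆[mvL] f) := by
  have hb : BddAbove (range fun x => ‖f x‖) := ⟨C, by rintro _ ⟨x, rfl⟩; exact hC x⟩
  exact hb.continuous_convolution_right_of_integrable mvL hg hfc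

lemma ftc {r r' : ℝ → Matrix (Fin d) (Fin d) ℝ}
    (hder : ∀ t ∈ Ici (0:ℝ), HasDerivWithinAt r (r' t) (Ici 0) t)
    (hcont : ContinuousOn r' (Ici 0)) {p q : ℝ} (hp : 0 ≤ p) (hpq : p ≤ q) :
    ∫ x in p..q, r' x = r q - r p := by
  have hrc : ContinuousOn r (Ici 0) := fun x hx => (hder x hx).continuousWithinAt
  refine intervalIntegral.integral_eq_sub_of_hasDeriv_right_of_le hpq
    (hrc.mono fun x hx => le_trans hp hx.1) (fun x hx => ?_) ?_
  · exact (hder x (le_trans hp (le_of_lt hx.1))).mono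
      (fun y hy => le_trans (le_trans hp (le_of_lt hx.1)) (le_of_lt hy))
  · refine (hcont.mono ?_).intervalIntegrable
    rw [uIcc_of_le hpq]
    exact fun x hx => le_trans hp hx.1

lemma swap_key (hg : Integrable g (volume : Measure ℝ)) (hfc : Continuous f)
    (hC : ∀ x, ‖f x‖ ≤ C) (a b : ℝ) :
    ∫ u in Ioc a b, ((g ⋆[mvL] f) u) = ∫ τ, mvL (∫ u in Ioc a b, g (u - τ)) (f τ) := by
  have hasm : AEStronglyMeasurable (fun p : ℝ × ℝ => mvL (g (p.1 - p.2)) (f p.2))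
      (((volume : Measure ℝ).restrict (Ioc a b)).prod (volume : Measure ℝ)) :=
    mvL.aestronglyMeasurable_comp₂
      (hg.aestronglyMeasurable.comp_quasiMeasurePreserving (qmp_sub_restrict _))
      ((hfc.comp continuous_snd).aestronglyMeasurable)
  have hint : Integrable (fun p : ℝ × ℝ => mvL (g (p.1 - p.2)) (f p.2))
      (((volume : Measure ℝ).restrict (Ioc a b)).prod (volume : Measure ℝ)) := by
    refine (integrable_prod_iff hasm).2 ⟨?_, ?_⟩
    · filter_upwards with u
      exact conv_integrand' hg hfc hC u
    · refine Integrable.mono' (g := fun _ => ‖mvL (d := d)‖ * (∫ x, ‖g x‖) * C)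
        (integrableOn_const measure_Ioc_lt_top.ne) hasm.norm.integral_prod_right' ?_
      filter_upwards with u
      have h1 : ∀ τ : ℝ, ‖mvL (g (u - τ)) (f τ)‖ ≤ ‖mvL (d := d)‖ * ‖g (u - τ)‖ * C := by
        intro τ
        calc ‖mvL (g (u - τ)) (f τ)‖ ≤ ‖mvL (d := d)‖ * ‖g (u - τ)‖ * ‖f τ‖ :=
              mvL.le_opNorm₂ _ _
        _ ≤ ‖mvL (d := d)‖ * ‖g (u - τ)‖ * C :=
              mul_le_mul_of_nonneg_left (hC _) (by positivity)
      calc ‖∫ τ, ‖mvL (g (u - τ)) (f τ)‖‖ = ∫ τ, ‖mvL (g (u - τ)) (f τ)‖ := by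
            rw [Real.norm_of_nonneg (integral_nonneg fun τ => norm_nonneg _)]
      _ ≤ ∫ τ, ‖mvL (d := d)‖ * ‖g (u - τ)‖ * C :=
            integral_mono (conv_integrand' hg hfc hC u).norm
              (((hg.comp_sub_left u).norm.const_mul _).mul_const _) h1
      _ = ‖mvL (d := d)‖ * (∫ τ, ‖g (u - τ)‖) * C := by
            rw [integral_mul_const, integral_const_mul]
      _ = ‖mvL (d := d)‖ * (∫ x, ‖g x‖) * C := by
            rw [integral_sub_left_eq_self (fun x => ‖g x‖) volume u]
  calc ∫ u in Ioc a b, ((g ⋆[mvL] f) u) = ∫ u in Ioc a b, ∫ τ, mvL (g (u - τ)) (f τ) := by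
        simp_rw [convolution_eq_swap]
  _ = ∫ τ, ∫ u in Ioc a b, mvL (g (u - τ)) (f τ) := integral_integral_swap hint
  _ = ∫ τ, mvL (∫ u in Ioc a b, g (u - τ)) (f τ) := by
        refine integral_congr_ae (Eventually.of_forall fun τ => ?_)
        exact (mvL.flip (f τ)).integral_comp_comm ((hg.comp_sub_right τ).integrableOn)

end GLEAux

open GLEAux

set_option maxHeartbeats 1000000

/-- for an integrable resolvent and a bounded continuous forcing `f`,
`v(t) = ∫_{-∞}^t r(t-τ) f(τ) dτ` is a bounded continuously differentiable solution of the
generalized Langevin equation with infinite time horizon. -/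
theorem resolvent_solves_GLE_infinite_horizon {d : ℕ} (hd : 1 ≤ d)
    (D : Matrix (Fin d) (Fin d) ℝ)
    (γ r r' : ℝ → Matrix (Fin d) (Fin d) ℝ)
    (hγ : IntegrableOn γ (Ioi 0))
    (hr : IsDiffResolvent D γ r r')
    (hrL1 : IntegrableOn r (Ioi 0))
    (f : ℝ → Fin d → ℝ) (hfc : Continuous f) (hfb : ∃ C : ℝ, ∀ t : ℝ, ‖f t‖ ≤ C) :
    letI v : ℝ → Fin d → ℝ := fun t => ∫ τ in Iic t, r (t - τ) *ᵥ f τ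
    (∃ C : ℝ, ∀ t : ℝ, ‖v t‖ ≤ C) ∧
    (∀ t : ℝ, HasDerivAt v
      (-(D *ᵥ v t) - (∫ s in Iic t, γ (t - s) *ᵥ v s) + f t) t) ∧
    Continuous (fun t => -(D *ᵥ v t) - (∫ s in Iic t, γ (t - s) *ᵥ v s) + f t) := by
  classical
  obtain ⟨C, hC⟩ := hfb
  have hC0 : 0 ≤ C := le_trans (norm_nonneg _) (hC 0)
  set v : ℝ → Fin d → ℝ := fun t => ∫ τ in Iic t, r (t - τ) *ᵥ f τ with hvdef
  set γ₀ : ℝ → Matrix (Fin d) (Fin d) ℝ := Set.indicator (Ioi 0) γ with hγ₀def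
  set r₀ : ℝ → Matrix (Fin d) (Fin d) ℝ := Set.indicator (Ioi 0) r with hr₀def
  set r'₀ : ℝ → Matrix (Fin d) (Fin d) ℝ := Set.indicator (Ioi 0) r' with hr'₀def
  have hγ₀ : Integrable γ₀ (volume : Measure ℝ) :=
    (integrable_indicator_iff measurableSet_Ioi).2 hγ
  have hr₀ : Integrable r₀ (volume : Measure ℝ) :=
    (integrable_indicator_iff measurableSet_Ioi).2 hrL1
  have hveq : v = (r₀ ⋆[mvL] f) := funext fun t => (conv_indicator_eq r f t).symm
  have hγconv : Integrable (γ₀ ⋆[mulL] r₀) (volume : Measure ℝ) :=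
    hγ₀.integrable_convolution mulL hr₀
  -- the r' formula extended by zero
  have hr'₀eq : r'₀ = fun t => -(mulL D (r₀ t)) - (γ₀ ⋆[mulL] r₀) t := by
    funext t
    by_cases ht : (0:ℝ) < t
    · have h1 : r'₀ t = r' t := Set.indicator_of_mem (mem_Ioi.2 ht) _
      have h2 : r₀ t = r t := Set.indicator_of_mem (mem_Ioi.2 ht) _
      have key : (γ₀ ⋆[mulL] r₀) t = ∫ s in (0:ℝ)..t, γ (t - s) * r s := by
        rw [convolution_def]
        have hind : ∀ s : ℝ, mulL (γ₀ s) (r₀ (t - s)) =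
            Set.indicator (Ioo 0 t) (fun s => γ s * r (t - s)) s := by
          intro s
          by_cases hs : s ∈ Ioo (0:ℝ) t
          · have e1 : γ₀ s = γ s := Set.indicator_of_mem (mem_Ioi.2 hs.1) _
            have e2 : r₀ (t - s) = r (t - s) :=
              Set.indicator_of_mem (mem_Ioi.2 (by simp [hs.2, sub_pos])) _
            rw [Set.indicator_of_mem hs, e1, e2, mulL_apply]
          · rw [Set.indicator_of_notMem hs]
            by_cases hs0 : s ≤ 0
            · have e1 : γ₀ s = 0 := Set.indicator_of_notMem (by simpa using hs0) _
              simp [e1]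
            · have hts : t ≤ s := by
                rcases lt_or_ge s t with h' | h'
                · exact absurd ⟨lt_of_not_ge hs0, h'⟩ hs
                · exact h'
              have e2 : r₀ (t - s) = 0 :=
                Set.indicator_of_notMem (by simp; linarith) _
              simp [e2]
        simp_rw [hind]
        rw [integral_indicator measurableSet_Ioo, setIntegral_congr_set Ioo_ae_eq_Ioc,
          ← intervalIntegral.integral_of_le (le_of_lt ht)]
        have hcs := intervalIntegral.integral_comp_sub_left (fun s => γ s * r (t - s)) t
          (a := 0) (b := t)
        simp only [sub_zero, sub_self] at hcs
        rw [← hcs]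
        refine intervalIntegral.integral_congr fun x _ => ?_
        simp [sub_sub_cancel]
      rw [h1, h2, hr.eq_left t (le_of_lt ht), key, mulL_apply]
    · push_neg at ht
      have h1 : r'₀ t = 0 := Set.indicator_of_notMem (by simpa using ht) _
      have h2 : r₀ t = 0 := Set.indicator_of_notMem (by simpa using ht) _
      have h3 : (γ₀ ⋆[mulL] r₀) t = 0 := by
        rw [convolution_def]
        have : ∀ s : ℝ, mulL (γ₀ s) (r₀ (t - s)) = 0 := by
          intro s
          by_cases hs : (0:ℝ) < s
          · have e2 : r₀ (t - s) = 0 := Set.indicator_of_notMem (by simp; linarith) _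
            simp [e2]
          · have e1 : γ₀ s = 0 := Set.indicator_of_notMem (by simpa using hs) _
            simp [e1]
        simp_rw [this, integral_zero]
      rw [h1, h2, h3]
      simp
  have hr'₀ : Integrable r'₀ (volume : Measure ℝ) := by
    rw [hr'₀eq]
    exact (((mulL D).integrable_comp hr₀).neg).sub hγconv
  -- boundedness and continuity of v
  have hvB : ∀ t, ‖v t‖ ≤ ‖mvL (d := d)‖ * (∫ x, ‖r₀ x‖) * C := by
    intro t; rw [hveq]; exact conv_bound hr₀ hfc hC t
  have hvcont : Continuous v := by rw [hveq]; exact conv_cont hr₀ hfc hC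
  have hγv_eq : ∀ t, (∫ s in Iic t, γ (t - s) *ᵥ v s) = (γ₀ ⋆[mvL] v) t :=
    fun t => (conv_indicator_eq γ v t).symm
  have hr'f_cont : Continuous (r'₀ ⋆[mvL] f) := conv_cont hr'₀ hfc hC
  -- the key pointwise identity for the convolution of r'₀ with f
  have hE7 : ∀ t, (r'₀ ⋆[mvL] f) t = -(D *ᵥ v t) - (γ₀ ⋆[mvL] v) t := by
    intro t
    have h1 : Integrable (fun s => mvL (mulL D (r₀ s)) (f (t - s))) (volume : Measure ℝ) :=
      conv_integrand ((mulL D).integrable_comp hr₀) hfc hC t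
    have h2 : Integrable (fun s => mvL ((γ₀ ⋆[mulL] r₀) s) (f (t - s))) (volume : Measure ℝ) :=
      conv_integrand hγconv hfc hC t
    have h3 : Integrable (fun s => mvL (r₀ s) (f (t - s))) (volume : Measure ℝ) :=
      conv_integrand hr₀ hfc hC t
    have step1 : (r'₀ ⋆[mvL] f) t =
        ∫ s, (-(mvL (mulL D (r₀ s)) (f (t - s))) - mvL ((γ₀ ⋆[mulL] r₀) s) (f (t - s))) := by
      rw [convolution_def, hr'₀eq]
      refine integral_congr_ae (Eventually.of_forall fun s => ?_)
      simp [Matrix.sub_mulVec, Matrix.neg_mulVec]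
    have h1' : Integrable (fun s => -(mvL (mulL D (r₀ s)) (f (t - s)))) (volume : Measure ℝ) :=
      h1.neg
    rw [step1, integral_sub h1' h2, integral_neg]
    congr 1
    · -- -(∫ D (r₀ s) f) = -(D *ᵥ v t)
      have hrw : ∀ s : ℝ, mvL (mulL D (r₀ s)) (f (t - s)) = (mvL D) (mvL (r₀ s) (f (t - s))) := by
        intro s; simp [Matrix.mulVec_mulVec]
      simp_rw [hrw]
      rw [(mvL D).integral_comp_comm h3, hveq]
      rfl
    · -- assoc step
      have hgk : ∀ᵐ x ∂(volume : Measure ℝ), ConvolutionExistsAt (fun x => ‖r₀ x‖)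
          (fun x => ‖f x‖) x (ContinuousLinearMap.mul ℝ ℝ) volume := by
        filter_upwards with x
        refine Integrable.mono' (hr₀.norm.mul_const C)
          (hr₀.norm.aestronglyMeasurable.mul
            ((hfc.norm.comp (continuous_const.sub continuous_id)).aestronglyMeasurable)) ?_
        filter_upwards with s
        simp only [ContinuousLinearMap.mul_apply']
        rw [Real.norm_of_nonneg (mul_nonneg (norm_nonneg _) (norm_nonneg _))]
        exact mul_le_mul_of_nonneg_left (hC _) (norm_nonneg _)
      have hnormconv_cont : Continuous ((fun x => ‖r₀ x‖) ⋆[ContinuousLinearMap.mul ℝ ℝ]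
          (fun x => ‖f x‖)) := by
        have hb : BddAbove (range fun x => ‖‖f x‖‖) := by
          refine ⟨C, ?_⟩; rintro _ ⟨x, rfl⟩
          simpa using hC x
        exact hb.continuous_convolution_right_of_integrable _ hr₀.norm hfc.norm
      have hnormconv_bdd : ∀ y, ((fun x => ‖r₀ x‖) ⋆[ContinuousLinearMap.mul ℝ ℝ]
          (fun x => ‖f x‖)) y ≤ (∫ x, ‖r₀ x‖) * C := by
        intro y
        rw [convolution_def]
        calc ∫ s, (ContinuousLinearMap.mul ℝ ℝ) ‖r₀ s‖ ‖f (y - s)‖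
            ≤ ∫ s, ‖r₀ s‖ * C := by
              refine integral_mono_of_nonneg (Eventually.of_forall fun s => ?_)
                (hr₀.norm.mul_const C) (Eventually.of_forall fun s => ?_)
              · exact mul_nonneg (norm_nonneg _) (norm_nonneg _)
              · exact mul_le_mul_of_nonneg_left (hC _) (norm_nonneg _)
        _ = (∫ x, ‖r₀ x‖) * C := integral_mul_const _ _
      have hnormconv_nonneg : ∀ y, 0 ≤ ((fun x => ‖r₀ x‖) ⋆[ContinuousLinearMap.mul ℝ ℝ]
          (fun x => ‖f x‖)) y := by
        intro y
        rw [convolution_def]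
        exact integral_nonneg fun s => mul_nonneg (norm_nonneg _) (norm_nonneg _)
      have hfgk : ConvolutionExistsAt (fun x => ‖γ₀ x‖) ((fun x => ‖r₀ x‖)
          ⋆[ContinuousLinearMap.mul ℝ ℝ] (fun x => ‖f x‖)) t (ContinuousLinearMap.mul ℝ ℝ)
          volume := by
        refine Integrable.mono' (hγ₀.norm.mul_const ((∫ x, ‖r₀ x‖) * C))
          (hγ₀.norm.aestronglyMeasurable.mul
            ((hnormconv_cont.comp (continuous_const.sub continuous_id)).aestronglyMeasurable)) ?_
        filter_upwards with s
        simp only [ContinuousLinearMap.mul_apply']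
        rw [Real.norm_of_nonneg (mul_nonneg (norm_nonneg _) (hnormconv_nonneg _))]
        exact mul_le_mul_of_nonneg_left (hnormconv_bdd _) (norm_nonneg _)
      have hassoc : ((γ₀ ⋆[mulL] r₀) ⋆[mvL] f) t = (γ₀ ⋆[mvL] (r₀ ⋆[mvL] f)) t :=
        convolution_assoc mulL mvL mvL mvL
          (fun x y z => by simp [Matrix.mulVec_mulVec]) (x₀ := t)
          hγ₀.aestronglyMeasurable hr₀.aestronglyMeasurable hfc.aestronglyMeasurable
          (hγ₀.ae_convolution_exists mulL hr₀) hgk hfgk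
      have : (∫ s, mvL ((γ₀ ⋆[mulL] r₀) s) (f (t - s))) = ((γ₀ ⋆[mulL] r₀) ⋆[mvL] f) t := rfl
      rw [this, hassoc, ← hveq]
  -- derivative candidate
  set w : ℝ → Fin d → ℝ := fun u => f u + (r'₀ ⋆[mvL] f) u with hwdef
  have hwcont : Continuous w := hfc.add hr'f_cont
  have hw_eq : ∀ t, w t = -(D *ᵥ v t) - (∫ s in Iic t, γ (t - s) *ᵥ v s) + f t := by
    intro t
    rw [hwdef]
    simp only
    rw [hE7 t, hγv_eq t]
    abel
  -- the fundamental identity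
  have key : ∀ a b : ℝ, a ≤ b → v b - v a = ∫ u in a..b, w u := by
    intro a b hab
    rw [intervalIntegral.integral_of_le hab]
    have hIf : ∀ x : ℝ, Integrable (fun τ => mvL (r₀ (x - τ)) (f τ)) (volume : Measure ℝ) :=
      fun x => conv_integrand' hr₀ hfc hC x
    have hv' : ∀ x : ℝ, v x = ∫ τ, mvL (r₀ (x - τ)) (f τ) := by
      intro x; rw [hveq]; exact convolution_eq_swap _
    have hInd : Integrable (Set.indicator (Ioc a b) f) (volume : Measure ℝ) :=
      (integrable_indicator_iff measurableSet_Ioc).2 (hfc.integrableOn_Ioc)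
    have hptwise : ∀ τ : ℝ, τ ≠ a → τ ≠ b →
        mvL (r₀ (b - τ)) (f τ) - mvL (r₀ (a - τ)) (f τ) =
        mvL (∫ u in Ioc a b, r'₀ (u - τ)) (f τ) + Set.indicator (Ioc a b) f τ := by
      intro τ hτa hτb
      have hΨ : ∫ u in Ioc a b, r'₀ (u - τ) = ∫ x in (a - τ)..(b - τ), r'₀ x := by
        rw [← intervalIntegral.integral_of_le hab,
          intervalIntegral.integral_comp_sub_right (fun x => r'₀ x) τ]
      rcases lt_or_gt_of_ne hτb with hb' | hb'
      · rcases lt_or_gt_of_ne hτa with ha' | ha'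
        · -- τ < a ≤ b
          have h0 : (0:ℝ) < a - τ := by linarith
          have h1 : r₀ (b - τ) = r (b - τ) :=
            Set.indicator_of_mem (mem_Ioi.2 (by linarith)) _
          have h2 : r₀ (a - τ) = r (a - τ) := Set.indicator_of_mem (mem_Ioi.2 h0) _
          have h3 : ∫ x in (a - τ)..(b - τ), r'₀ x = ∫ x in (a - τ)..(b - τ), r' x := by
            rw [intervalIntegral.integral_of_le (by linarith),
              intervalIntegral.integral_of_le (by linarith : a - τ ≤ b - τ)]
            refine setIntegral_congr_fun measurableSet_Ioc fun x hx => ?_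
            exact Set.indicator_of_mem (mem_Ioi.2 (lt_trans h0 hx.1)) _
          have h4 : Set.indicator (Ioc a b) f τ = 0 :=
            Set.indicator_of_notMem (fun hmem => absurd hmem.1 (not_lt.2 (le_of_lt ha'))) _
          rw [hΨ, h3, ftc hr.hasDeriv hr.contDeriv (le_of_lt h0) (by linarith), h1, h2, h4]
          simp [Matrix.sub_mulVec]
        · -- a < τ < b
          have h1 : r₀ (b - τ) = r (b - τ) :=
            Set.indicator_of_mem (mem_Ioi.2 (by linarith)) _
          have h2 : r₀ (a - τ) = 0 := Set.indicator_of_notMem (by simp; linarith) _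
          have hsplit : ∫ x in (a - τ)..(b - τ), r'₀ x =
              (∫ x in (a - τ)..(0:ℝ), r'₀ x) + ∫ x in (0:ℝ)..(b - τ), r'₀ x :=
            (intervalIntegral.integral_add_adjacent_intervals
              (hr'₀.intervalIntegrable) (hr'₀.intervalIntegrable)).symm
          have hz : ∫ x in (a - τ)..(0:ℝ), r'₀ x = 0 := by
            rw [intervalIntegral.integral_of_le (by linarith : a - τ ≤ (0:ℝ)),
              setIntegral_congr_fun (g := fun _ => (0 : Matrix (Fin d) (Fin d) ℝ))
                measurableSet_Ioc (fun x hx => Set.indicator_of_notMem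
                  (by simp; linarith [hx.2]) _)]
            simp
          have hm : ∫ x in (0:ℝ)..(b - τ), r'₀ x = ∫ x in (0:ℝ)..(b - τ), r' x := by
            rw [intervalIntegral.integral_of_le (by linarith : (0:ℝ) ≤ b - τ),
              intervalIntegral.integral_of_le (by linarith : (0:ℝ) ≤ b - τ)]
            exact setIntegral_congr_fun measurableSet_Ioc
              (fun x hx => Set.indicator_of_mem (mem_Ioi.2 hx.1) _)
          have h4 : Set.indicator (Ioc a b) f τ = f τ :=
            Set.indicator_of_mem (mem_Ioc.2 ⟨ha', le_of_lt hb'⟩) _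
          rw [hΨ, hsplit, hz, hm, zero_add,
            ftc hr.hasDeriv hr.contDeriv le_rfl (by linarith), hr.init, h1, h2, h4]
          simp [Matrix.sub_mulVec, Matrix.one_mulVec]
      · -- b < τ
        have h1 : r₀ (b - τ) = 0 := Set.indicator_of_notMem (by simp; linarith) _
        have h2 : r₀ (a - τ) = 0 := Set.indicator_of_notMem (by simp; linarith) _
        have hz : ∫ u in Ioc a b, r'₀ (u - τ) = 0 := by
          rw [setIntegral_congr_fun (g := fun _ => (0 : Matrix (Fin d) (Fin d) ℝ))
            measurableSet_Ioc (fun u hu => Set.indicator_of_notMem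
              (by simp; linarith [hu.2]) _)]
          simp
        have h4 : Set.indicator (Ioc a b) f τ = 0 :=
          Set.indicator_of_notMem (fun hmem => absurd hmem.2 (not_le.2 hb')) _
        rw [h1, h2, hz, h4]
        simp
    have hae : ∀ᵐ τ : ℝ, mvL (r₀ (b - τ)) (f τ) - mvL (r₀ (a - τ)) (f τ) =
        mvL (∫ u in Ioc a b, r'₀ (u - τ)) (f τ) + Set.indicator (Ioc a b) f τ := by
      have ha : ∀ᵐ τ : ℝ, τ ≠ a := by
        rw [ae_iff]
        simpa using Real.volume_singleton (x := a)
      have hb : ∀ᵐ τ : ℝ, τ ≠ b := by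
        rw [ae_iff]
        simpa using Real.volume_singleton (x := b)
      filter_upwards [ha, hb] with τ h1 h2 using hptwise τ h1 h2
    have hΨint : Integrable (fun τ => mvL (∫ u in Ioc a b, r'₀ (u - τ)) (f τ))
        (volume : Measure ℝ) := by
      have h5 : Integrable (fun τ => (mvL (r₀ (b - τ)) (f τ) - mvL (r₀ (a - τ)) (f τ)) -
          Set.indicator (Ioc a b) f τ) (volume : Measure ℝ) := ((hIf b).sub (hIf a)).sub hInd
      refine h5.congr ?_
      filter_upwards [hae] with τ hh
      rw [hh]
      abel
    calc v b - v a = ∫ τ, (mvL (r₀ (b - τ)) (f τ) - mvL (r₀ (a - τ)) (f τ)) := by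
          rw [hv' b, hv' a, integral_sub (hIf b) (hIf a)]
    _ = ∫ τ, (mvL (∫ u in Ioc a b, r'₀ (u - τ)) (f τ) + Set.indicator (Ioc a b) f τ) :=
          integral_congr_ae hae
    _ = (∫ τ, mvL (∫ u in Ioc a b, r'₀ (u - τ)) (f τ)) + ∫ τ, Set.indicator (Ioc a b) f τ :=
          integral_add hΨint hInd
    _ = (∫ u in Ioc a b, (r'₀ ⋆[mvL] f) u) + ∫ τ in Ioc a b, f τ := by
          rw [← swap_key hr'₀ hfc hC a b, integral_indicator measurableSet_Ioc]
    _ = ∫ u in Ioc a b, w u := by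
          have hadd : ∫ u in Ioc a b, (f u + (r'₀ ⋆[mvL] f) u) =
              (∫ u in Ioc a b, f u) + ∫ u in Ioc a b, (r'₀ ⋆[mvL] f) u :=
            integral_add (hfc.integrableOn_Ioc) (hr'f_cont.integrableOn_Ioc)
          rw [hwdef]
          simp only
          rw [hadd, add_comm]
  have hv0 : ∀ t : ℝ, v t = v 0 + ∫ u in (0:ℝ)..t, w u := by
    intro t
    rcases le_total (0:ℝ) t with h | h
    · exact sub_eq_iff_eq_add'.1 (key 0 t h)
    · have h2 := key t 0 h
      rw [intervalIntegral.integral_symm]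
      rw [← h2]
      abel
  have hderiv : ∀ t, HasDerivAt v (w t) t := by
    intro t
    have h1 : HasDerivAt (fun x => ∫ u in (0:ℝ)..x, w u) (w t) t :=
      intervalIntegral.integral_hasDerivAt_right (hwcont.intervalIntegrable _ _)
        (hwcont.stronglyMeasurableAtFilter _ _) hwcont.continuousAt
    have h2 : HasDerivAt (fun x => v 0 + ∫ u in (0:ℝ)..x, w u) (w t) t := h1.const_add (v 0)
    have h3 : v = fun x => v 0 + ∫ u in (0:ℝ)..x, w u := funext hv0
    rw [h3]
    exact h2
  refine ⟨⟨_, hvB⟩, fun t => (hw_eq t) ▸ hderiv t, ?_⟩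
  have : (fun t => -(D *ᵥ v t) - (∫ s in Iic t, γ (t - s) *ᵥ v s) + f t) = w :=
    funext fun t => (hw_eq t).symm
  rw [this]
  exact hwcont
end
end

section
/- Let d ≥ 1, D ∈ ℝ^{d×d}, let γ : (0,∞) → ℝ^{d×d} be locally integrable, let Σ ∈ ℝ^{d×d}, and let r be the differential resolvent of γ with drift matrix D. Then for all s, t ≥ 0 there holds ∫₀^s ∫_{τ′}^{s+t} r(s+t−τ) γ(τ−τ′) Σ r(s−τ′)ᵀ dτ dτ′ = −∫₀^s r(s+t−τ) D Σ r(s−τ)ᵀ dτ − ∫₀^s r′(s+t−τ) Σ r(s−τ)ᵀ dτ. -/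
open MeasureTheory Matrix Set Filter
open scoped Matrix.Norms.L2Operator Real Topology ComplexOrder

noncomputable section

/-- the identity for the "positive part" double integral
`∫₀^s ∫_{τ′}^{s+t} r(s+t-τ) γ(τ-τ′) Σ r(s-τ′)ᵀ dτ dτ′
  = -∫₀^s r(s+t-τ) D Σ r(s-τ)ᵀ dτ - ∫₀^s r′(s+t-τ) Σ r(s-τ)ᵀ dτ`. -/
theorem double_integral_positive_part {d : ℕ} (hd : 1 ≤ d)
    (D : Matrix (Fin d) (Fin d) ℝ)
    (γ r r' : ℝ → Matrix (Fin d) (Fin d) ℝ)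
    (hγ : ∀ T > (0 : ℝ), IntegrableOn γ (Ioc 0 T))
    (S : Matrix (Fin d) (Fin d) ℝ)
    (hr : IsDiffResolvent D γ r r') :
    ∀ s ∈ Ici (0 : ℝ), ∀ t ∈ Ici (0 : ℝ),
      (∫ τ' in (0 : ℝ)..s, ∫ τ in τ'..(s + t),
          r (s + t - τ) * γ (τ - τ') * S * (r (s - τ'))ᵀ) =
        -(∫ τ in (0 : ℝ)..s, r (s + t - τ) * D * S * (r (s - τ))ᵀ) -
          ∫ τ in (0 : ℝ)..s, r' (s + t - τ) * S * (r (s - τ))ᵀ := by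
  intro s hs t ht
  simp only [mem_Ici] at hs ht
  have hrc : ContinuousOn r (Ici 0) := fun x hx => (hr.hasDeriv x hx).continuousWithinAt
  have htrans : Continuous (fun A : Matrix (Fin d) (Fin d) ℝ => Aᵀ) :=
    LinearMap.continuous_of_finiteDimensional
      ((Matrix.transposeLinearEquiv (Fin d) (Fin d) ℝ ℝ).toLinearMap)
  -- inner integral identity
  have key : ∀ τ' ∈ Set.uIcc (0:ℝ) s,
      (∫ τ in τ'..(s+t), r (s+t-τ) * γ (τ - τ') * S * (r (s - τ'))ᵀ)
      = (-(r (s+t-τ') * D) - r' (s+t-τ')) * S * (r (s-τ'))ᵀ := by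
    intro τ' hτ'
    rw [Set.uIcc_of_le hs] at hτ'
    obtain ⟨h0, h1⟩ := hτ'
    set T : ℝ := s + t - τ' with hTdef
    have hT : 0 ≤ T := by simp only [hTdef]; linarith
    set C : Matrix (Fin d) (Fin d) ℝ := S * (r (s - τ'))ᵀ with hC
    have hint : IntervalIntegrable (fun u => r (T - u) * γ u) volume 0 T := by
      rcases eq_or_lt_of_le hT with h | h
      · exact h ▸ IntervalIntegrable.refl
      · have hγi : IntervalIntegrable γ volume 0 T :=
          (intervalIntegrable_iff_integrableOn_Ioc_of_le hT).mpr (hγ T h)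
        refine hγi.continuousOn_mul ?_
        refine hrc.comp (by fun_prop) ?_
        intro x hx
        rw [Set.uIcc_of_le hT] at hx
        simp only [mem_Ici]
        linarith [hx.1, hx.2]
    have heq : ∀ τ, r (s+t-τ) * γ (τ - τ') * S * (r (s - τ'))ᵀ
        = (fun u => r (T - u) * γ u * C) (τ - τ') := by
      intro τ
      simp only [hC]
      rw [show T - (τ - τ') = s + t - τ by simp only [hTdef]; ring, mul_assoc]
    simp_rw [heq]
    rw [intervalIntegral.integral_comp_sub_right (fun u => r (T - u) * γ u * C) τ']
    have hLr : (∫ u in (τ' - τ')..(s + t - τ'), r (T - u) * γ u * C)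
        = (∫ u in (0:ℝ)..T, r (T - u) * γ u) * C := by
      rw [sub_self, ← hTdef]
      set L : Matrix (Fin d) (Fin d) ℝ →L[ℝ] Matrix (Fin d) (Fin d) ℝ :=
        ⟨LinearMap.mulRight ℝ C, LinearMap.continuous_of_finiteDimensional _⟩ with hL
      have : (∫ u in (0:ℝ)..T, r (T - u) * γ u * C)
          = ∫ u in (0:ℝ)..T, L (r (T - u) * γ u) := by
        simp [hL, LinearMap.mulRight_apply]
      rw [this, L.intervalIntegral_comp_comm hint]
      simp [hL, LinearMap.mulRight_apply]
    rw [hLr]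
    have := hr.eq_right T (mem_Ici.mpr hT)
    have hI : (∫ u in (0:ℝ)..T, r (T - u) * γ u) = -(r T * D) - r' T := by
      rw [this]; abel
    rw [hI, hC, ← mul_assoc]
  have hmaps1 : ∀ x ∈ Set.uIcc (0:ℝ) s, s + t - x ∈ Ici (0:ℝ) := by
    intro x hx
    rw [Set.uIcc_of_le hs] at hx
    simp only [mem_Ici]; linarith [hx.1, hx.2]
  have hmaps2 : ∀ x ∈ Set.uIcc (0:ℝ) s, s - x ∈ Ici (0:ℝ) := by
    intro x hx
    rw [Set.uIcc_of_le hs] at hx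
    simp only [mem_Ici]; linarith [hx.1, hx.2]
  have hA : ContinuousOn (fun τ => r (s+t-τ)) (Set.uIcc (0:ℝ) s) :=
    hrc.comp (by fun_prop) hmaps1
  have hA' : ContinuousOn (fun τ => r' (s+t-τ)) (Set.uIcc (0:ℝ) s) :=
    hr.contDeriv.comp (by fun_prop) hmaps1
  have hB : ContinuousOn (fun τ => (r (s-τ))ᵀ) (Set.uIcc (0:ℝ) s) :=
    htrans.comp_continuousOn (hrc.comp (by fun_prop) hmaps2)
  have hint1 : IntervalIntegrable (fun τ => r (s+t-τ) * D * S * (r (s-τ))ᵀ) volume 0 s :=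
    (((hA.mul continuousOn_const).mul continuousOn_const).mul hB).intervalIntegrable
  have hint2 : IntervalIntegrable (fun τ => r' (s+t-τ) * S * (r (s-τ))ᵀ) volume 0 s :=
    ((hA'.mul continuousOn_const).mul hB).intervalIntegrable
  rw [intervalIntegral.integral_congr key]
  have : ∀ τ' : ℝ, (-(r (s+t-τ') * D) - r' (s+t-τ')) * S * (r (s-τ'))ᵀ
      = -(r (s+t-τ') * D * S * (r (s-τ'))ᵀ) - r' (s+t-τ') * S * (r (s-τ'))ᵀ := by
    intro τ'
    simp [sub_mul, neg_mul]
  simp_rw [this]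
  have hint1n : IntervalIntegrable (fun τ => -(r (s+t-τ) * D * S * (r (s-τ))ᵀ)) volume 0 s :=
    hint1.neg
  rw [← intervalIntegral.integral_neg, ← intervalIntegral.integral_sub hint1n hint2]
end
end

section
/- Let d ≥ 1, D ∈ ℝ^{d×d}, let γ : (0,∞) → ℝ^{d×d} be Bochner integrable, and let r be the differential resolvent of γ with drift matrix D; assume r is bounded on [0,∞). Let h : [0,∞) → ℝ^{d×d} be measurable and bounded. If ∫₀ᵗ r(t−τ) h(τ) dτ = 0 for every t ≥ 0, then h(t) = 0 for almost every t ≥ 0. -/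
open MeasureTheory Matrix Set Filter
open scoped Matrix.Norms.L2Operator Real Topology ComplexOrder

noncomputable section

section Aux

variable {d : ℕ}

local notation "M" => Matrix (Fin d) (Fin d) ℝ

private lemma mp_const_sub (c : ℝ) :
    MeasurePreserving (fun x : ℝ => c - x) volume volume := by
  have h : (fun x : ℝ => c - x) = (fun x : ℝ => c + x) ∘ (fun x : ℝ => -x) := by
    funext x; simp [sub_eq_add_neg]
  rw [h]
  exact (measurePreserving_add_left volume c).comp (Measure.measurePreserving_neg volume)

private lemma aesm_const_sub {ψ : ℝ → M} (hψ : AEStronglyMeasurable ψ (volume : Measure ℝ))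
    (c : ℝ) : AEStronglyMeasurable (fun x => ψ (c - x)) (volume : Measure ℝ) :=
  hψ.comp_quasiMeasurePreserving (mp_const_sub c).quasiMeasurePreserving

private lemma aesm_sub_const {ψ : ℝ → M} (hψ : AEStronglyMeasurable ψ (volume : Measure ℝ))
    (c : ℝ) : AEStronglyMeasurable (fun x => ψ (x - c)) (volume : Measure ℝ) := by
  have h := hψ.comp_quasiMeasurePreserving
    (measurePreserving_add_right volume (-c)).quasiMeasurePreserving
  simpa [Function.comp_def, sub_eq_add_neg] using h

private lemma aesm_sub_pair {ψ : ℝ → M} (hψ : AEStronglyMeasurable ψ (volume : Measure ℝ)) :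
    AEStronglyMeasurable (fun p : ℝ × ℝ => ψ (p.2 - p.1))
      ((volume : Measure ℝ).prod (volume : Measure ℝ)) := by
  have h1 : AEStronglyMeasurable (fun y : ℝ => ψ (-y)) (volume : Measure ℝ) :=
    hψ.comp_quasiMeasurePreserving (Measure.measurePreserving_neg volume).quasiMeasurePreserving
  have h2 := h1.comp_quasiMeasurePreserving (quasiMeasurePreserving_sub volume volume)
  simpa [Function.comp_def, neg_sub] using h2

private lemma finRestrict (a b : ℝ) : IsFiniteMeasure ((volume : Measure ℝ).restrict (Ioc a b)) :=
  ⟨by rw [Measure.restrict_apply_univ]; exact measure_Ioc_lt_top⟩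

private lemma intOn_conv {φ ψ : ℝ → M} (hφ : AEStronglyMeasurable φ (volume : Measure ℝ))
    (hψ : AEStronglyMeasurable ψ (volume : Measure ℝ)) {K1 K2 : ℝ} {a b c : ℝ}
    (hb1 : ∀ x, x ≤ c - a → ‖φ x‖ ≤ K1) (hb2 : ∀ x ∈ Ioc a b, ‖ψ x‖ ≤ K2) :
    IntegrableOn (fun τ => φ (c - τ) * ψ τ) (Ioc a b) := by
  haveI := finRestrict a b
  refine Integrable.mono' (integrable_const (K1 * K2))
    (((aesm_const_sub hφ c).mul hψ).restrict) ?_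
  filter_upwards [ae_restrict_mem measurableSet_Ioc] with τ hτ
  have h1 : ‖φ (c - τ)‖ ≤ K1 := hb1 _ (by linarith [hτ.1])
  have h2 : ‖ψ τ‖ ≤ K2 := hb2 τ hτ
  calc ‖φ (c - τ) * ψ τ‖ ≤ ‖φ (c - τ)‖ * ‖ψ τ‖ := norm_mul_le _ _
    _ ≤ K1 * K2 := mul_le_mul h1 h2 (norm_nonneg _) ((norm_nonneg _).trans h1)

private lemma intOn_conv_γ {γind ψ : ℝ → M} (hγi : Integrable γind (volume : Measure ℝ))
    (hψ : AEStronglyMeasurable ψ (volume : Measure ℝ)) {K : ℝ} {a b c : ℝ}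
    (hb : ∀ x, ‖ψ x‖ ≤ K) :
    IntegrableOn (fun τ => γind (c - τ) * ψ τ) (Ioc a b) := by
  have hγm : AEStronglyMeasurable γind (volume : Measure ℝ) := hγi.aestronglyMeasurable
  have hgi : Integrable (fun x => ‖γind (c - x)‖ * K) (volume : Measure ℝ) :=
    (((mp_const_sub c).integrable_comp hγm).2 hγi).norm.mul_const K
  refine Integrable.mono' hgi.restrict (((aesm_const_sub hγm c).mul hψ).restrict) ?_
  refine ae_of_all _ fun τ => ?_
  calc ‖γind (c - τ) * ψ τ‖ ≤ ‖γind (c - τ)‖ * ‖ψ τ‖ := norm_mul_le _ _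
    _ ≤ ‖γind (c - τ)‖ * K := mul_le_mul_of_nonneg_left (hb τ) (norm_nonneg _)

end Aux

/-- for a bounded resolvent `r`, the convolution operator `h ↦ r * h` is
injective on bounded measurable functions: if `∫₀ᵗ r(t-τ) h(τ) dτ = 0` for every `t ≥ 0`,
then `h = 0` almost everywhere on `[0,∞)`. -/
theorem resolvent_convolution_injective {d : ℕ} (hd : 1 ≤ d)
    (D : Matrix (Fin d) (Fin d) ℝ)
    (γ r r' : ℝ → Matrix (Fin d) (Fin d) ℝ)
    (hγ : IntegrableOn γ (Ioi 0))
    (hr : IsDiffResolvent D γ r r')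
    (hrb : ∃ C : ℝ, ∀ t ∈ Ici (0 : ℝ), ‖r t‖ ≤ C)
    (h : ℝ → Matrix (Fin d) (Fin d) ℝ)
    (hmeas : StronglyMeasurable h)
    (hbd : ∃ C : ℝ, ∀ t ∈ Ici (0 : ℝ), ‖h t‖ ≤ C)
    (hconv : ∀ t ∈ Ici (0 : ℝ), (∫ τ in (0 : ℝ)..t, r (t - τ) * h τ) = 0) :
    ∀ᵐ t ∂(volume.restrict (Ioi (0 : ℝ))), h t = 0 := by
  obtain ⟨Cr, hCr⟩ := hrb
  obtain ⟨Ch, hCh⟩ := hbd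
  have hrc : ContinuousOn r (Ici 0) := fun x hx => (hr.hasDeriv x hx).continuousWithinAt
  set rind : ℝ → Matrix (Fin d) (Fin d) ℝ := (Ioi (0:ℝ)).indicator r with hrind_def
  set rind' : ℝ → Matrix (Fin d) (Fin d) ℝ := (Ioi (0:ℝ)).indicator r' with hrind'_def
  set γind : ℝ → Matrix (Fin d) (Fin d) ℝ := (Ioi (0:ℝ)).indicator γ with hγind_def
  have hrindm : AEStronglyMeasurable rind volume :=
    (aestronglyMeasurable_indicator_iff measurableSet_Ioi).2
      ((hrc.mono Ioi_subset_Ici_self).aestronglyMeasurable measurableSet_Ioi)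
  have hrind'm : AEStronglyMeasurable rind' volume :=
    (aestronglyMeasurable_indicator_iff measurableSet_Ioi).2
      ((hr.contDeriv.mono Ioi_subset_Ici_self).aestronglyMeasurable measurableSet_Ioi)
  have hγindm : AEStronglyMeasurable γind volume :=
    (aestronglyMeasurable_indicator_iff measurableSet_Ioi).2 hγ.1
  have hγindi : Integrable γind volume := (integrable_indicator_iff measurableSet_Ioi).2 hγ
  have hhm : AEStronglyMeasurable h volume := hmeas.aestronglyMeasurable
  have hrindb : ∀ x, ‖rind x‖ ≤ max Cr 0 := by
    intro x
    by_cases hx : x ∈ Ioi (0:ℝ)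
    · rw [hrind_def, indicator_of_mem hx]
      exact (hCr x (mem_Ici.2 (le_of_lt (mem_Ioi.1 hx)))).trans (le_max_left _ _)
    · rw [hrind_def, indicator_of_notMem hx]; simp
  have hhb : ∀ x ∈ Ici (0:ℝ), ‖h x‖ ≤ max Ch 0 := fun x hx => (hCh x hx).trans (le_max_left _ _)
  have hne : ∀ c : ℝ, ∀ᵐ τ : ℝ, τ ≠ c := fun c => compl_mem_ae_iff.2 (measure_singleton c)
  -- the convolution hypothesis, `rind` version
  have hconv0 : ∀ u ∈ Ici (0:ℝ), ∫ τ in Ioc 0 u, rind (u - τ) * h τ = 0 := by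
    intro u hu
    have e : ∫ τ in Ioc 0 u, rind (u - τ) * h τ = ∫ τ in Ioc 0 u, r (u - τ) * h τ := by
      refine setIntegral_congr_ae measurableSet_Ioc ?_
      filter_upwards [hne u] with τ hτu hτ
      have : u - τ ∈ Ioi (0:ℝ) := by
        simp only [mem_Ioi, sub_pos]
        exact lt_of_le_of_ne hτ.2 hτu
      rw [hrind_def, indicator_of_mem this]
    rw [e, ← intervalIntegral.integral_of_le hu]
    exact hconv u hu
  -- integrability workhorse
  have IA : ∀ (c u : ℝ), IntegrableOn (fun τ => rind (c - τ) * h τ) (Ioc 0 u) :=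
    fun c u => intOn_conv hrindm hhm (fun x _ => hrindb x) (fun x hx => hhb x (le_of_lt hx.1))
  -- Claim C': (r' * h)(s) = 0 for s ≥ 0 (in indicator form)
  have C' : ∀ s ∈ Ici (0:ℝ), ∫ τ in Ioc 0 s, rind' (s - τ) * h τ = 0 := by
    intro s hs
    haveI := finRestrict (0:ℝ) s
    obtain ⟨Cs, hCs⟩ := (isCompact_Icc (a := (0:ℝ)) (b := s)).exists_bound_of_continuousOn
      (hr.contDeriv.mono Icc_subset_Ici_self)
    have hrind'b : ∀ x, x ≤ s → ‖rind' x‖ ≤ max Cs 0 := by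
      intro x hx
      by_cases h0 : x ∈ Ioi (0:ℝ)
      · rw [hrind'_def, indicator_of_mem h0]
        exact (hCs x ⟨le_of_lt h0, hx⟩).trans (le_max_left _ _)
      · rw [hrind'_def, indicator_of_notMem h0]; simp
    set g₂ : ℝ × ℝ → Matrix (Fin d) (Fin d) ℝ :=
      fun p => γind (s - p.2) * (rind (p.2 - p.1) * h p.1) with hg₂def
    -- g₂ is integrable on the product square
    have hg₂m : AEStronglyMeasurable g₂
        ((volume.restrict (Ioc 0 s)).prod (volume.restrict (Ioc 0 s))) := by
      rw [Measure.prod_restrict]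
      exact (((aesm_const_sub hγindm s).comp_snd).mul
        ((aesm_sub_pair hrindm).mul hhm.comp_fst)).restrict
    have hg₂i : Integrable g₂
        ((volume.restrict (Ioc 0 s)).prod (volume.restrict (Ioc 0 s))) := by
      have hg : Integrable (fun u : ℝ => ‖γind (s - u)‖) (volume.restrict (Ioc 0 s)) :=
        (((mp_const_sub s).integrable_comp hγindm).2 hγindi).norm.restrict
      have hbound : Integrable
          (fun p : ℝ × ℝ => (max Cr 0 * max Ch 0) * ‖γind (s - p.2)‖)
          ((volume.restrict (Ioc 0 s)).prod (volume.restrict (Ioc 0 s))) :=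
        (integrable_const (max Cr 0 * max Ch 0)).mul_prod hg
      refine hbound.mono' hg₂m ?_
      have hmem : ∀ᵐ p : ℝ × ℝ ∂((volume.restrict (Ioc 0 s)).prod (volume.restrict (Ioc 0 s))),
          p ∈ (Ioc (0:ℝ) s) ×ˢ (Ioc (0:ℝ) s) := by
        rw [Measure.prod_restrict]
        exact ae_restrict_mem (measurableSet_Ioc.prod measurableSet_Ioc)
      filter_upwards [hmem] with p hp
      have h1 : ‖rind (p.2 - p.1)‖ ≤ max Cr 0 := hrindb _
      have h2 : ‖h p.1‖ ≤ max Ch 0 := hhb _ (le_of_lt hp.1.1)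
      calc ‖g₂ p‖ ≤ ‖γind (s - p.2)‖ * ‖rind (p.2 - p.1) * h p.1‖ := by
            rw [hg₂def]; exact norm_mul_le _ _
        _ ≤ ‖γind (s - p.2)‖ * (max Cr 0 * max Ch 0) := by
            refine mul_le_mul_of_nonneg_left ?_ (norm_nonneg _)
            exact (norm_mul_le _ _).trans
              (mul_le_mul h1 h2 (norm_nonneg _) (le_max_right Cr 0))
        _ = (max Cr 0 * max Ch 0) * ‖γind (s - p.2)‖ := mul_comm _ _
    -- pointwise identity coming from `eq_left`
    have hptwise : ∀ᵐ τ ∂(volume.restrict (Ioc 0 s)),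
        rind' (s - τ) * h τ =
          -(D * (rind (s - τ) * h τ)) - ∫ u in Ioc 0 s, g₂ (τ, u) := by
      rw [ae_restrict_iff' measurableSet_Ioc]
      filter_upwards [hne s] with τ hτs hτ
      have hτs' : τ < s := lt_of_le_of_ne hτ.2 hτs
      have hst : (0:ℝ) < s - τ := by linarith
      have hi1 : IntegrableOn (fun u => g₂ (τ, u)) (Ioc 0 s) := by
        simp only [hg₂def]
        exact intOn_conv_γ hγindi ((aesm_sub_const hrindm τ).mul aestronglyMeasurable_const)
          (fun u => (norm_mul_le _ _).trans
            (mul_le_mul_of_nonneg_right (hrindb _) (norm_nonneg _)))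
      have e0 : ∫ u in Ioc 0 s, g₂ (τ, u) = ∫ u in Ioc τ s, g₂ (τ, u) := by
        rw [show Ioc (0:ℝ) s = Ioc 0 τ ∪ Ioc τ s from (Ioc_union_Ioc_eq_Ioc hτ.1.le hτs'.le).symm,
          setIntegral_union (Ioc_disjoint_Ioc_of_le le_rfl) measurableSet_Ioc
            (hi1.mono_set (Ioc_subset_Ioc_right hτs'.le))
            (hi1.mono_set (Ioc_subset_Ioc_left hτ.1.le))]
        have hz : ∫ u in Ioc 0 τ, g₂ (τ, u) = 0 := by
          rw [setIntegral_congr_fun measurableSet_Ioc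
            (fun u hu => ?_), integral_zero]
          show g₂ (τ, u) = 0
          rw [hg₂def]
          simp only
          rw [hrind_def, indicator_of_notMem (by simp only [mem_Ioi, sub_pos, not_lt]; exact hu.2)]
          simp
        rw [hz, zero_add]
      have e1 : ∫ u in Ioc τ s, g₂ (τ, u)
          = ∫ u in Ioc τ s, γ (s - u) * (r (u - τ) * h τ) := by
        refine setIntegral_congr_ae measurableSet_Ioc ?_
        filter_upwards [hne s] with u hus hu
        rw [hg₂def]
        simp only
        rw [hγind_def, indicator_of_mem (by simp only [mem_Ioi, sub_pos]; exact lt_of_le_of_ne hu.2 hus),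
          hrind_def, indicator_of_mem (by simp only [mem_Ioi, sub_pos]; exact hu.1)]
      have e2 : ∫ u in Ioc τ s, γ (s - u) * (r (u - τ) * h τ)
          = ∫ x in Ioc 0 (s - τ), γ (s - τ - x) * (r x * h τ) := by
        rw [← intervalIntegral.integral_of_le hτs'.le,
          ← intervalIntegral.integral_of_le hst.le]
        have hcomp := intervalIntegral.integral_comp_sub_right (a := τ) (b := s)
          (fun x => γ (s - τ - x) * (r x * h τ)) τ
        have harg : ∀ x : ℝ, s - τ - (x - τ) = s - x := fun x => by ring
        simp only [harg, sub_self] at hcomp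
        exact hcomp
      have e3 : ∫ x in Ioc 0 (s - τ), γ (s - τ - x) * (r x * h τ)
          = (∫ x in Ioc 0 (s - τ), γ (s - τ - x) * r x) * h τ := by
        have hint : IntegrableOn (fun x => γ (s - τ - x) * r x) (Ioc 0 (s - τ)) := by
          have base : IntegrableOn (fun x => γind (s - τ - x) * rind x) (Ioc 0 (s - τ)) :=
            intOn_conv_γ hγindi hrindm hrindb
          refine base.congr_fun_ae ?_
          rw [EventuallyEq, ae_restrict_iff' measurableSet_Ioc]
          filter_upwards [hne (s - τ)] with x hxs hx
          rw [hγind_def, indicator_of_mem (by simp only [mem_Ioi, sub_pos]; exact lt_of_le_of_ne hx.2 hxs),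
            hrind_def, indicator_of_mem (mem_Ioi.2 hx.1)]
        have hc := ContinuousLinearMap.integral_comp_comm
          ((ContinuousLinearMap.mul ℝ (Matrix (Fin d) (Fin d) ℝ)).flip (h τ)) hint
        simpa [mul_assoc] using hc
      rw [hrind'_def, indicator_of_mem (mem_Ioi.2 hst), hrind_def,
        indicator_of_mem (mem_Ioi.2 hst)]
      rw [e0, e1, e2, e3]
      rw [hr.eq_left (s - τ) hst.le, intervalIntegral.integral_of_le hst.le]
      simp [sub_mul, mul_assoc]
    -- put the pieces together
    have hIA : IntegrableOn (fun τ => D * (rind (s - τ) * h τ)) (Ioc 0 s) := by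
      have := (ContinuousLinearMap.mul ℝ (Matrix (Fin d) (Fin d) ℝ) D).integrable_comp (IA s s)
      simpa [IntegrableOn] using this
    have hIB : IntegrableOn (fun τ => ∫ u in Ioc 0 s, g₂ (τ, u)) (Ioc 0 s) :=
      hg₂i.integral_prod_left
    have ecm : ∫ τ in Ioc 0 s, D * (rind (s - τ) * h τ)
        = D * ∫ τ in Ioc 0 s, rind (s - τ) * h τ := by
      have := ContinuousLinearMap.integral_comp_comm
        (ContinuousLinearMap.mul ℝ (Matrix (Fin d) (Fin d) ℝ) D) (IA s s)
      simpa using this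
    have eswap : ∫ τ in Ioc 0 s, ∫ u in Ioc 0 s, g₂ (τ, u)
        = ∫ u in Ioc 0 s, ∫ τ in Ioc 0 s, g₂ (τ, u) := by
      have h' : Integrable (Function.uncurry fun τ u => g₂ (τ, u))
          ((volume.restrict (Ioc 0 s)).prod (volume.restrict (Ioc 0 s))) := by
        exact hg₂i
      exact integral_integral_swap h'
    have hinner : ∀ u ∈ Ioc (0:ℝ) s, ∫ τ in Ioc 0 s, g₂ (τ, u) = 0 := by
      intro u hu
      have e : ∫ τ in Ioc 0 s, g₂ (τ, u)
          = γind (s - u) * ∫ τ in Ioc 0 s, rind (u - τ) * h τ := by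
        simp only [hg₂def]
        have := ContinuousLinearMap.integral_comp_comm
          (ContinuousLinearMap.mul ℝ (Matrix (Fin d) (Fin d) ℝ) (γind (s - u))) (IA u s)
        simpa using this
      rw [e]
      have hred : ∫ τ in Ioc 0 s, rind (u - τ) * h τ = ∫ τ in Ioc 0 u, rind (u - τ) * h τ := by
        rw [show Ioc (0:ℝ) s = Ioc 0 u ∪ Ioc u s from (Ioc_union_Ioc_eq_Ioc hu.1.le hu.2).symm,
          setIntegral_union (Ioc_disjoint_Ioc_of_le le_rfl) measurableSet_Ioc
            ((IA u s).mono_set (Ioc_subset_Ioc_right hu.2))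
            ((IA u s).mono_set (Ioc_subset_Ioc_left hu.1.le))]
        have hz : ∫ τ in Ioc u s, rind (u - τ) * h τ = 0 := by
          rw [setIntegral_congr_fun measurableSet_Ioc (fun τ hτ => ?_), integral_zero]
          show rind (u - τ) * h τ = 0
          rw [hrind_def, indicator_of_notMem
            (by simp only [mem_Ioi, sub_pos, not_lt]; exact hτ.1.le)]
          simp
        rw [hz, add_zero]
      rw [hred, hconv0 u hu.1.le, mul_zero]
    have hBzero : ∫ u in Ioc 0 s, ∫ τ in Ioc 0 s, g₂ (τ, u) = 0 := by
      rw [setIntegral_congr_fun measurableSet_Ioc (fun u hu => hinner u hu), integral_zero]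
    calc ∫ τ in Ioc 0 s, rind' (s - τ) * h τ
        = ∫ τ in Ioc 0 s, (-(D * (rind (s - τ) * h τ)) - ∫ u in Ioc 0 s, g₂ (τ, u)) :=
          integral_congr_ae hptwise
      _ = (∫ τ in Ioc 0 s, -(D * (rind (s - τ) * h τ)))
            - ∫ τ in Ioc 0 s, ∫ u in Ioc 0 s, g₂ (τ, u) := integral_sub hIA.neg hIB
      _ = 0 := by
          rw [integral_neg, ecm, eswap, hconv0 s hs, hBzero, mul_zero, neg_zero, sub_zero]
  -- Main step: the primitive of h vanishes on [0, ∞)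
  have key : ∀ t ∈ Ici (0:ℝ), ∫ τ in Ioc 0 t, h τ = 0 := by
    intro t ht
    haveI := finRestrict (0:ℝ) t
    obtain ⟨Cs, hCs⟩ := (isCompact_Icc (a := (0:ℝ)) (b := t)).exists_bound_of_continuousOn
      (hr.contDeriv.mono Icc_subset_Ici_self)
    have hrind'b : ∀ x, x ≤ t → ‖rind' x‖ ≤ max Cs 0 := by
      intro x hx
      by_cases h0 : x ∈ Ioi (0:ℝ)
      · rw [hrind'_def, indicator_of_mem h0]
        exact (hCs x ⟨le_of_lt h0, hx⟩).trans (le_max_left _ _)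
      · rw [hrind'_def, indicator_of_notMem h0]; simp
    set g₁ : ℝ × ℝ → Matrix (Fin d) (Fin d) ℝ :=
      fun p => rind' (p.2 - p.1) * h p.1 with hg₁def
    have hg₁m : AEStronglyMeasurable g₁
        ((volume.restrict (Ioc 0 t)).prod (volume.restrict (Ioc 0 t))) := by
      rw [Measure.prod_restrict]
      exact ((aesm_sub_pair hrind'm).mul hhm.comp_fst).restrict
    have hg₁i : Integrable g₁
        ((volume.restrict (Ioc 0 t)).prod (volume.restrict (Ioc 0 t))) := by
      refine (integrable_const (max Cs 0 * max Ch 0)).mono' hg₁m ?_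
      have hmem : ∀ᵐ p : ℝ × ℝ ∂((volume.restrict (Ioc 0 t)).prod (volume.restrict (Ioc 0 t))),
          p ∈ (Ioc (0:ℝ) t) ×ˢ (Ioc (0:ℝ) t) := by
        rw [Measure.prod_restrict]
        exact ae_restrict_mem (measurableSet_Ioc.prod measurableSet_Ioc)
      filter_upwards [hmem] with p hp
      have h1 : ‖rind' (p.2 - p.1)‖ ≤ max Cs 0 :=
        hrind'b _ (by linarith [hp.1.1, hp.2.2])
      have h2 : ‖h p.1‖ ≤ max Ch 0 := hhb _ (le_of_lt hp.1.1)
      calc ‖g₁ p‖ = ‖rind' (p.2 - p.1) * h p.1‖ := by rw [hg₁def]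
        _ ≤ ‖rind' (p.2 - p.1)‖ * ‖h p.1‖ := norm_mul_le _ _
        _ ≤ max Cs 0 * max Ch 0 := mul_le_mul h1 h2 (norm_nonneg _) (le_max_right Cs 0)
    have hInt_h : IntegrableOn h (Ioc 0 t) := by
      refine Integrable.mono' (integrable_const (max Ch 0)) hhm.restrict ?_
      filter_upwards [ae_restrict_mem measurableSet_Ioc] with x hx
      exact hhb x (le_of_lt hx.1)
    -- pointwise identity via FTC
    have hptw : ∀ᵐ τ ∂(volume.restrict (Ioc 0 t)),
        rind (t - τ) * h τ - h τ = ∫ u in Ioc 0 t, g₁ (τ, u) := by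
      rw [ae_restrict_iff' measurableSet_Ioc]
      filter_upwards [hne t] with τ hτt hτ
      have hτt' : τ < t := lt_of_le_of_ne hτ.2 hτt
      have htt : (0:ℝ) < t - τ := by linarith
      have hsl : IntegrableOn (fun u => g₁ (τ, u)) (Ioc 0 t) := by
        simp only [hg₁def]
        haveI := finRestrict (0:ℝ) t
        refine Integrable.mono' (integrable_const (max Cs 0 * ‖h τ‖))
          (((aesm_sub_const hrind'm τ).mul aestronglyMeasurable_const).restrict) ?_
        filter_upwards [ae_restrict_mem measurableSet_Ioc] with u hu
        exact (norm_mul_le _ _).trans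
          (mul_le_mul_of_nonneg_right (hrind'b _ (by linarith [hu.2, hτ.1])) (norm_nonneg _))
      have e0 : ∫ u in Ioc 0 t, g₁ (τ, u) = ∫ u in Ioc τ t, g₁ (τ, u) := by
        rw [show Ioc (0:ℝ) t = Ioc 0 τ ∪ Ioc τ t from (Ioc_union_Ioc_eq_Ioc hτ.1.le hτt'.le).symm,
          setIntegral_union (Ioc_disjoint_Ioc_of_le le_rfl) measurableSet_Ioc
            (hsl.mono_set (Ioc_subset_Ioc_right hτt'.le))
            (hsl.mono_set (Ioc_subset_Ioc_left hτ.1.le))]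
        have hz : ∫ u in Ioc 0 τ, g₁ (τ, u) = 0 := by
          rw [setIntegral_congr_fun measurableSet_Ioc (fun u hu => ?_), integral_zero]
          show g₁ (τ, u) = 0
          rw [hg₁def]
          simp only
          rw [hrind'_def, indicator_of_notMem
            (by simp only [mem_Ioi, sub_pos, not_lt]; exact hu.2)]
          simp
        rw [hz, zero_add]
      have e1 : ∫ u in Ioc τ t, g₁ (τ, u) = ∫ u in Ioc τ t, r' (u - τ) * h τ := by
        refine setIntegral_congr_fun measurableSet_Ioc (fun u hu => ?_)
        rw [hg₁def]
        simp only
        rw [hrind'_def, indicator_of_mem (by simp only [mem_Ioi, sub_pos]; exact hu.1)]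
      have e2 : ∫ u in Ioc τ t, r' (u - τ) * h τ = ∫ x in Ioc 0 (t - τ), r' x * h τ := by
        rw [← intervalIntegral.integral_of_le hτt'.le,
          ← intervalIntegral.integral_of_le htt.le]
        have hcomp := intervalIntegral.integral_comp_sub_right (a := τ) (b := t)
          (fun x => r' x * h τ) τ
        simpa [sub_self] using hcomp
      have hi3 : IntegrableOn r' (Ioc 0 (t - τ)) :=
        ((hr.contDeriv.mono Icc_subset_Ici_self).integrableOn_Icc).mono_set Ioc_subset_Icc_self
      have e3 : ∫ x in Ioc 0 (t - τ), r' x * h τ = (∫ x in Ioc 0 (t - τ), r' x) * h τ := by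
        have hc := ContinuousLinearMap.integral_comp_comm
          ((ContinuousLinearMap.mul ℝ (Matrix (Fin d) (Fin d) ℝ)).flip (h τ)) hi3
        simpa using hc
      have e4 : ∫ x in Ioc 0 (t - τ), r' x = r (t - τ) - 1 := by
        rw [← intervalIntegral.integral_of_le htt.le]
        have hderiv : ∀ x ∈ Ioo (0:ℝ) (t - τ), HasDerivWithinAt r (r' x) (Ioi x) x := fun x hx =>
          ((hr.hasDeriv x hx.1.le).hasDerivAt (Ici_mem_nhds hx.1)).hasDerivWithinAt
        have hii : IntervalIntegrable r' volume 0 (t - τ) := by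
          apply ContinuousOn.intervalIntegrable
          rw [uIcc_of_le htt.le]
          exact hr.contDeriv.mono Icc_subset_Ici_self
        rw [intervalIntegral.integral_eq_sub_of_hasDeriv_right_of_le htt.le
          (hrc.mono Icc_subset_Ici_self) hderiv hii, hr.init]
      rw [hrind_def, indicator_of_mem (mem_Ioi.2 htt)]
      rw [e0, e1, e2, e3, e4, sub_mul, one_mul]
    -- assemble
    have hIA' : IntegrableOn (fun τ => rind (t - τ) * h τ) (Ioc 0 t) := IA t t
    have e5 : (∫ τ in Ioc 0 t, rind (t - τ) * h τ) - ∫ τ in Ioc 0 t, h τ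
        = ∫ τ in Ioc 0 t, (rind (t - τ) * h τ - h τ) := (integral_sub hIA' hInt_h).symm
    have e6 : ∫ τ in Ioc 0 t, (rind (t - τ) * h τ - h τ)
        = ∫ τ in Ioc 0 t, ∫ u in Ioc 0 t, g₁ (τ, u) := integral_congr_ae hptw
    have e7 : ∫ τ in Ioc 0 t, ∫ u in Ioc 0 t, g₁ (τ, u)
        = ∫ u in Ioc 0 t, ∫ τ in Ioc 0 t, g₁ (τ, u) := by
      have h' : Integrable (Function.uncurry fun τ u => g₁ (τ, u))
          ((volume.restrict (Ioc 0 t)).prod (volume.restrict (Ioc 0 t))) := by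
        exact hg₁i
      exact integral_integral_swap h'
    have e8 : ∀ u ∈ Ioc (0:ℝ) t, ∫ τ in Ioc 0 t, g₁ (τ, u) = 0 := by
      intro u hu
      have hslu : IntegrableOn (fun τ => g₁ (τ, u)) (Ioc 0 t) := by
        simp only [hg₁def]
        refine intOn_conv hrind'm hhm (K1 := max Cs 0) (K2 := max Ch 0) ?_
          (fun x hx => hhb x (le_of_lt hx.1))
        intro x hx
        exact hrind'b x (by linarith [hu.2])
      rw [show Ioc (0:ℝ) t = Ioc 0 u ∪ Ioc u t from (Ioc_union_Ioc_eq_Ioc hu.1.le hu.2).symm,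
        setIntegral_union (Ioc_disjoint_Ioc_of_le le_rfl) measurableSet_Ioc
          (hslu.mono_set (Ioc_subset_Ioc_right hu.2))
          (hslu.mono_set (Ioc_subset_Ioc_left hu.1.le))]
      have z2 : ∫ τ in Ioc u t, g₁ (τ, u) = 0 := by
        rw [setIntegral_congr_fun measurableSet_Ioc (fun τ hτ => ?_), integral_zero]
        show g₁ (τ, u) = 0
        rw [hg₁def]
        simp only
        rw [hrind'_def, indicator_of_notMem
          (by simp only [mem_Ioi, sub_pos, not_lt]; exact hτ.1.le)]
        simp
      have z1 : ∫ τ in Ioc 0 u, g₁ (τ, u) = 0 := by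
        have : ∫ τ in Ioc 0 u, g₁ (τ, u) = ∫ τ in Ioc 0 u, rind' (u - τ) * h τ := by
          refine setIntegral_congr_fun measurableSet_Ioc (fun τ _ => ?_)
          rw [hg₁def]
        rw [this]
        exact C' u hu.1.le
      rw [z1, z2, add_zero]
    have e9 : ∫ u in Ioc 0 t, ∫ τ in Ioc 0 t, g₁ (τ, u) = 0 := by
      rw [setIntegral_congr_fun measurableSet_Ioc (fun u hu => e8 u hu), integral_zero]
    have := e5.trans (e6.trans (e7.trans e9))
    rw [hconv0 t ht, zero_sub] at this
    simpa [neg_eq_zero] using this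
  -- Conclusion via the Lebesgue differentiation theorem
  set g : ℝ → Matrix (Fin d) (Fin d) ℝ := (Ioi (0:ℝ)).indicator h with hgdef
  have hgb : ∀ x, ‖g x‖ ≤ max Ch 0 := by
    intro x
    by_cases hx : x ∈ Ioi (0:ℝ)
    · rw [hgdef, indicator_of_mem hx]; exact hhb x (mem_Ici.2 (le_of_lt (mem_Ioi.1 hx)))
    · rw [hgdef, indicator_of_notMem hx]; simp
  have hgm : AEStronglyMeasurable g volume :=
    (hmeas.indicator measurableSet_Ioi).aestronglyMeasurable
  have hgloc : LocallyIntegrable g volume := by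
    rw [locallyIntegrable_iff]
    intro k hk
    haveI : IsFiniteMeasure (volume.restrict k) :=
      ⟨by rw [Measure.restrict_apply_univ]; exact hk.measure_lt_top⟩
    exact Integrable.mono' (integrable_const (max Ch 0)) hgm.restrict
      (ae_of_all _ fun x => hgb x)
  have hgI : ∀ a b : ℝ, 0 ≤ a → a ≤ b → ∫ x in Ioc a b, g x = 0 := by
    intro a b ha hab
    have h1 : ∀ u : ℝ, 0 ≤ u → ∫ x in Ioc 0 u, g x = 0 := by
      intro u hu
      have : ∫ x in Ioc 0 u, g x = ∫ x in Ioc 0 u, h x := by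
        refine setIntegral_congr_fun measurableSet_Ioc (fun x hx => ?_)
        rw [hgdef, indicator_of_mem (mem_Ioi.2 hx.1)]
      rw [this]
      exact key u hu
    have hia : IntegrableOn g (Ioc 0 b) :=
      (hgloc.integrableOn_isCompact isCompact_Icc).mono_set Ioc_subset_Icc_self
    have hsum := setIntegral_union (f := g) (μ := volume) (Ioc_disjoint_Ioc_of_le le_rfl) measurableSet_Ioc
      (hia.mono_set (Ioc_subset_Ioc_right hab)) (hia.mono_set (Ioc_subset_Ioc_left ha))
    rw [Ioc_union_Ioc_eq_Ioc ha hab] at hsum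
    rw [h1 b (ha.trans hab), h1 a ha] at hsum
    simpa using hsum.symm
  have hae := IsUnifLocDoublingMeasure.ae_tendsto_average (μ := (volume : Measure ℝ)) hgloc 1
  rw [ae_restrict_iff' measurableSet_Ioi]
  filter_upwards [hae] with x hx hx0
  have hx0' : (0:ℝ) < x := hx0
  have htd : Tendsto (fun δ : ℝ => ⨍ y in Metric.closedBall x δ, g y) (𝓝[>] 0) (𝓝 (g x)) := by
    refine hx (fun _ => x) (fun δ => δ) tendsto_id ?_
    filter_upwards [self_mem_nhdsWithin] with δ hδ
    exact Metric.mem_closedBall_self (by simp only [mem_Ioi] at hδ; nlinarith)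
  have hzero : (fun δ : ℝ => ⨍ y in Metric.closedBall x δ, g y) =ᶠ[𝓝[>] (0:ℝ)] (fun _ => 0) := by
    filter_upwards [Ioo_mem_nhdsGT_of_mem (⟨le_rfl, hx0'⟩ : (0:ℝ) ∈ Ico 0 x)] with δ hδ
    have h2 : ∫ y in Metric.closedBall x δ, g y = 0 := by
      rw [Real.closedBall_eq_Icc, integral_Icc_eq_integral_Ioc]
      exact hgI (x - δ) (x + δ) (by linarith [hδ.2]) (by linarith [hδ.1])
    simp only [setAverage_eq, h2, smul_zero]
  have hfin := tendsto_nhds_unique ((Filter.tendsto_congr' hzero).1 htd) tendsto_const_nhds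
  rwa [hgdef, indicator_of_mem hx0] at hfin
end
end
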